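/- arXiv:2108.07160 — 11 statements merged into one kernel-verified Lean document; each statement's English description precedes it below -/
import Mathlib

section
/- If G is a tree, then a vertex u of G is avoidable if and only if u is a leaf of G (i.e., has degree at most 1). -/
open SimpleGraph

/-- The closed neighborhood `N[u]` of a vertex. -/
def closedNbhd {V : Type*} (G : SimpleGraph V) (u : V) : Set V :=
  insert u (G.neighborSet u)

/-- A vertex `u` is avoidable if every pair of distinct neighbors `x, y` of `u`
lies in the same connected component of `G − (N[u] \ {x, y})`, i.e. there is a
walk from `x` to `y` all of whose vertices avoid `N[u] \ {x, y}`. -/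
def Avoidable {V : Type*} (G : SimpleGraph V) (u : V) : Prop :=
  ∀ x y : V, G.Adj u x → G.Adj u y → x ≠ y →
    ∃ p : G.Walk x y, ∀ v ∈ p.support, v ∉ closedNbhd G u \ ({x, y} : Set V)

theorem avoidable_iff_leaf_of_isTree {V : Type*} [Fintype V] [DecidableEq V]
    (G : SimpleGraph V) [DecidableRel G.Adj] (hT : G.IsTree) (u : V) :
    Avoidable G u ↔ G.degree u ≤ 1 := by
  constructor
  · intro hA
    by_contra hdeg
    push_neg at hdeg
    rw [show G.degree u = (G.neighborFinset u).card from rfl] at hdeg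
    obtain ⟨x, hx, y, hy, hxy⟩ := Finset.one_lt_card.mp hdeg
    rw [mem_neighborFinset] at hx hy
    obtain ⟨p, hp⟩ := hA x y hx hy hxy
    -- The path from p avoids u
    have hu_notin : u ∉ p.support := by
      intro hu
      exact hp u hu ⟨Set.mem_insert u _, by
        simp only [Set.mem_insert_iff, Set.mem_singleton_iff]
        push_neg
        exact ⟨hx.ne, hy.ne⟩⟩
    have hq : (p.toPath : G.Walk x y).IsPath := p.toPath.property
    have hu_notin_q : u ∉ (p.toPath : G.Walk x y).support := fun h =>
      hu_notin (Walk.support_toPath_subset p h)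
    -- The walk x - u - y is a path
    let w : G.Walk x y := Walk.cons hx.symm (Walk.cons hy Walk.nil)
    have hw : w.IsPath := by
      simp only [w, Walk.isPath_def, Walk.support_cons, Walk.support_nil]
      simp [hx.ne', hy.ne', hy.ne, hxy]
    have := (hT.existsUnique_path x y).unique hq hw
    rw [this] at hu_notin_q
    simp [w] at hu_notin_q
  · intro hdeg x y hx hy hxy
    exfalso
    rw [← mem_neighborFinset] at hx hy
    have h2 : 1 < G.degree u := Finset.one_lt_card.mpr ⟨x, hx, y, hy, hxy⟩
    omega
end

section
/- If a vertex u of a finite simple graph G is not avoidable in G, then u is avoidable in the complement graph of G. -/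
open SimpleGraph

theorem avoidable_compl_of_not_avoidable {V : Type*} [Fintype V]
    (G : SimpleGraph V) (u : V) (h : ¬ Avoidable G u) : Avoidable Gᶜ u := by
  simp only [Avoidable, not_forall] at h
  obtain ⟨a, b, hua, hub, hab, hw⟩ := h
  push_neg at hw
  -- hw : ∀ p : G.Walk a b, ∃ v ∈ p.support, v ∈ closedNbhd G u \ {a, b}
  have hnadj : ¬ G.Adj a b := by
    intro hadj
    obtain ⟨v, hv, hmem⟩ := hw (Walk.cons hadj Walk.nil)
    simp only [Walk.support_cons, Walk.support_nil, List.mem_cons,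
      List.mem_singleton, List.not_mem_nil, or_false] at hv
    rcases hv with rfl | rfl
    · exact hmem.2 (by simp)
    · exact hmem.2 (by simp)
  have hcab : Gᶜ.Adj a b := ⟨hab, hnadj⟩
  have key : ∀ z, ¬ G.Adj u z → u ≠ z → ¬ (G.Adj a z ∧ G.Adj z b) := by
    rintro z hz huz ⟨h1, h2⟩
    obtain ⟨v, hv, hmem⟩ := hw (Walk.cons h1 (Walk.cons h2 Walk.nil))
    simp only [Walk.support_cons, Walk.support_nil, List.mem_cons,
      List.mem_singleton, List.not_mem_nil, or_false] at hv
    rcases hv with rfl | rfl | rfl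
    · exact hmem.2 (by simp)
    · rcases hmem.1 with rfl | hz'
      · exact huz rfl
      · exact hz hz'
    · exact hmem.2 (by simp)
  have hanot : a ∉ closedNbhd Gᶜ u := by
    simp only [closedNbhd, Set.mem_insert_iff, mem_neighborSet, compl_adj, not_or]
    exact ⟨fun e => G.irrefl (e ▸ hua), fun h' => h'.2 hua⟩
  have hbnot : b ∉ closedNbhd Gᶜ u := by
    simp only [closedNbhd, Set.mem_insert_iff, mem_neighborSet, compl_adj, not_or]
    exact ⟨fun e => G.irrefl (e ▸ hub), fun h' => h'.2 hub⟩
  intro x y hx hy hxy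
  have hxa : x ≠ a := fun e => hx.2 (e ▸ hua)
  have hxb : x ≠ b := fun e => hx.2 (e ▸ hub)
  have hya : y ≠ a := fun e => hy.2 (e ▸ hua)
  have hyb : y ≠ b := fun e => hy.2 (e ▸ hub)
  have hxor : Gᶜ.Adj x a ∨ Gᶜ.Adj x b := by
    by_contra hc
    push_neg at hc
    have h1 : G.Adj a x := by
      have := hc.1; rw [compl_adj] at this; push_neg at this
      exact (this hxa).symm
    have h2 : G.Adj x b := by
      have := hc.2; rw [compl_adj] at this; push_neg at this
      exact this hxb
    exact key x hx.2 hx.1 ⟨h1, h2⟩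
  have hyor : Gᶜ.Adj y a ∨ Gᶜ.Adj y b := by
    by_contra hc
    push_neg at hc
    have h1 : G.Adj a y := by
      have := hc.1; rw [compl_adj] at this; push_neg at this
      exact (this hya).symm
    have h2 : G.Adj y b := by
      have := hc.2; rw [compl_adj] at this; push_neg at this
      exact this hyb
    exact key y hy.2 hy.1 ⟨h1, h2⟩
  rcases hxor with hxa' | hxb' <;> rcases hyor with hya' | hyb'
  · refine ⟨Walk.cons hxa' (Walk.cons hya'.symm Walk.nil), ?_⟩
    intro v hv
    simp only [Walk.support_cons, Walk.support_nil, List.mem_cons,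
      List.mem_singleton, List.not_mem_nil, or_false] at hv
    rcases hv with rfl | rfl | rfl
    · exact fun hm => hm.2 (by simp)
    · exact fun hm => hanot hm.1
    · exact fun hm => hm.2 (by simp)
  · refine ⟨Walk.cons hxa' (Walk.cons hcab (Walk.cons hyb'.symm Walk.nil)), ?_⟩
    intro v hv
    simp only [Walk.support_cons, Walk.support_nil, List.mem_cons,
      List.mem_singleton, List.not_mem_nil, or_false] at hv
    rcases hv with rfl | rfl | rfl | rfl
    · exact fun hm => hm.2 (by simp)
    · exact fun hm => hanot hm.1
    · exact fun hm => hbnot hm.1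
    · exact fun hm => hm.2 (by simp)
  · refine ⟨Walk.cons hxb' (Walk.cons hcab.symm (Walk.cons hya'.symm Walk.nil)), ?_⟩
    intro v hv
    simp only [Walk.support_cons, Walk.support_nil, List.mem_cons,
      List.mem_singleton, List.not_mem_nil, or_false] at hv
    rcases hv with rfl | rfl | rfl | rfl
    · exact fun hm => hm.2 (by simp)
    · exact fun hm => hbnot hm.1
    · exact fun hm => hanot hm.1
    · exact fun hm => hm.2 (by simp)
  · refine ⟨Walk.cons hxb' (Walk.cons hyb'.symm Walk.nil), ?_⟩
    intro v hv
    simp only [Walk.support_cons, Walk.support_nil, List.mem_cons,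
      List.mem_singleton, List.not_mem_nil, or_false] at hv
    rcases hv with rfl | rfl | rfl
    · exact fun hm => hm.2 (by simp)
    · exact fun hm => hbnot hm.1
    · exact fun hm => hm.2 (by simp)
end

section
/- Let G be a finite simple graph that is not complete, let u be a vertex of G, and let C̄(u) be the vertex set of the connected component of the complement of G containing u. Then u is avoidable in G if and only if |C̄(u)| > 1 and u is avoidable in the induced subgraph G[C̄(u)]. -/
open SimpleGraph

private lemma walk_toInduce {V : Type*} {G : SimpleGraph V} {s : Set V} :
    ∀ {x y : V} (p : G.Walk x y) (_ : ∀ v ∈ p.support, v ∈ s)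
      (hx : x ∈ s) (hy : y ∈ s),
      ∃ q : (G.induce s).Walk ⟨x, hx⟩ ⟨y, hy⟩, ∀ v ∈ q.support, (v : V) ∈ p.support := by
  intro x y p
  induction p with
  | nil => intro _ hx hy; exact ⟨.nil, by simp⟩
  | @cons x b y h p ih =>
    intro hs hx hy
    have hb : b ∈ s := hs b (by simp)
    obtain ⟨q, hq⟩ := ih (fun v hv => hs v (by simp [hv])) hb hy
    refine ⟨.cons (by simpa using h : (G.induce s).Adj ⟨x, hx⟩ ⟨b, hb⟩) q, ?_⟩
    intro v hv
    rw [Walk.support_cons] at hv ⊢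
    rcases List.mem_cons.1 hv with h1 | h1
    · simp [h1]
    · exact List.mem_cons.2 (Or.inr (hq v h1))

private lemma walk_ofInduce {V : Type*} {G : SimpleGraph V} {s : Set V} :
    ∀ {a b : s} (q : (G.induce s).Walk a b),
      ∃ p : G.Walk a.1 b.1, ∀ v ∈ p.support, ∃ w ∈ q.support, (w : V) = v := by
  intro a b q
  induction q with
  | nil =>
    refine ⟨.nil, ?_⟩
    intro v hv
    simp only [Walk.support_nil, List.mem_singleton] at hv
    exact ⟨_, by simp, hv.symm⟩
  | @cons a c b h q ih =>
    obtain ⟨p, hp⟩ := ih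
    refine ⟨.cons (by simpa using h) p, ?_⟩
    intro v hv
    rw [Walk.support_cons] at hv
    rcases List.mem_cons.1 hv with rfl | h1
    · exact ⟨_, by simp, rfl⟩
    · obtain ⟨w, hw, hww⟩ := hp v h1
      exact ⟨w, by simp [hw], hww⟩

private lemma adj_of_walk_support_subset {V : Type*} {G : SimpleGraph V} {x y : V}
    (p : G.Walk x y) (hxy : x ≠ y) (hs : ∀ v ∈ p.support, v = x ∨ v = y) :
    G.Adj x y := by
  cases p with
  | nil => exact absurd rfl hxy
  | cons h q =>
    rename_i b
    have hb : b = x ∨ b = y := hs b (by simp)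
    rcases hb with rfl | rfl
    · exact (h.ne rfl).elim
    · exact h

theorem avoidable_iff_avoidable_cocomponent {V : Type*} [Fintype V]
    (G : SimpleGraph V) (hG : G ≠ ⊤) (u : V) :
    Avoidable G u ↔
      ({v | Gᶜ.Reachable u v} : Set V).Nontrivial ∧
        Avoidable (G.induce {v | Gᶜ.Reachable u v}) ⟨u, Reachable.refl u⟩ := by
  set C : Set V := {v | Gᶜ.Reachable u v} with hCdef
  have huC : u ∈ C := Reachable.refl u
  -- every vertex outside C is adjacent (in G) to every other vertex of C
  have hout : ∀ v ∉ C, ∀ c ∈ C, c ≠ v → G.Adj c v := by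
    intro v hv c hc hne
    by_contra hadj
    exact hv (Reachable.trans hc (Adj.reachable ((compl_adj G c v).2 ⟨hne, hadj⟩)))
  constructor
  · intro hA
    have hnt : C.Nontrivial := by
      by_contra hnt
      have hsub : ∀ v ∈ C, v = u := by
        intro v hv
        by_contra hvu
        exact hnt ⟨v, hv, u, huC, hvu⟩
      obtain ⟨x, y, hxy, hnadj⟩ : ∃ x y : V, x ≠ y ∧ ¬G.Adj x y := by
        by_contra hcon
        push_neg at hcon
        exact hG (by ext a b; simp only [top_adj]; exact ⟨fun h => h.ne, fun h => hcon a b h⟩)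
      have hxu : x ≠ u := by
        rintro rfl
        have hyC : y ∈ C := Adj.reachable ((compl_adj G _ y).2 ⟨hxy, hnadj⟩)
        exact hxy (hsub y hyC).symm
      have hyu : y ≠ u := by
        rintro rfl
        have hxC : x ∈ C :=
          Adj.reachable ((compl_adj G _ x).2 ⟨hxy.symm, fun h => hnadj h.symm⟩)
        exact hxy (hsub x hxC)
      have hax : G.Adj u x := hout x (fun h => hxu (hsub x h)) u huC (Ne.symm hxu)
      have hay : G.Adj u y := hout y (fun h => hyu (hsub y h)) u huC (Ne.symm hyu)
      obtain ⟨p, hp⟩ := hA x y hax hay hxy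
      refine hnadj (adj_of_walk_support_subset p hxy ?_)
      intro v hv
      by_contra hvxy
      push_neg at hvxy
      have hmem : v ∈ closedNbhd G u := by
        rcases eq_or_ne v u with rfl | hvu
        · exact Set.mem_insert _ _
        · exact Set.mem_insert_of_mem _ (hout v (fun h => hvu (hsub v h)) u huC (Ne.symm hvu))
      have hnmem : v ∉ ({x, y} : Set V) := by
        simp [hvxy.1, hvxy.2]
      exact hp v hv ⟨hmem, hnmem⟩
    refine ⟨hnt, ?_⟩
    rintro ⟨x, hx⟩ ⟨y, hy⟩ hax hay hne
    have hax' : G.Adj u x := by simpa using hax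
    have hay' : G.Adj u y := by simpa using hay
    have hne' : x ≠ y := fun h => hne (Subtype.ext h)
    obtain ⟨p, hp⟩ := hA x y hax' hay' hne'
    have hsupp : ∀ v ∈ p.support, v ∈ C := by
      intro v hv
      by_contra hvC
      have hmem : v ∈ closedNbhd G u :=
        Set.mem_insert_of_mem _ (hout v hvC u huC (fun h => hvC (h ▸ huC)))
      have hnmem : v ∉ ({x, y} : Set V) := by
        intro hm
        rcases hm with rfl | hm
        · exact hvC hx
        · rw [Set.mem_singleton_iff] at hm; exact hvC (hm ▸ hy)
      exact hp v hv ⟨hmem, hnmem⟩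
    obtain ⟨q, hq⟩ := walk_toInduce p hsupp hx hy
    refine ⟨q, ?_⟩
    rintro ⟨v, hvC⟩ hv hmem
    obtain ⟨h1, h2⟩ := hmem
    have hvcl : v ∈ closedNbhd G u := by
      simp only [closedNbhd, Set.mem_insert_iff] at h1 ⊢
      rcases h1 with h1 | h1
      · exact Or.inl (congrArg Subtype.val h1)
      · exact Or.inr (by simpa using h1)
    have hvny : v ∉ ({x, y} : Set V) := by
      intro hm
      rcases hm with rfl | hm
      · exact h2 (Or.inl (Subtype.ext rfl))
      · rw [Set.mem_singleton_iff] at hm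
        exact h2 (Or.inr (Set.mem_singleton_iff.2 (Subtype.ext hm)))
    exact hp v (hq _ hv) ⟨hvcl, hvny⟩
  · rintro ⟨hnt, hA⟩ x y hax hay hne
    by_cases hx : x ∈ C
    · by_cases hy : y ∈ C
      · -- both in C: use induced avoidability
        have hax' : (G.induce C).Adj ⟨u, huC⟩ ⟨x, hx⟩ := by simpa using hax
        have hay' : (G.induce C).Adj ⟨u, huC⟩ ⟨y, hy⟩ := by simpa using hay
        obtain ⟨q, hq⟩ := hA ⟨x, hx⟩ ⟨y, hy⟩ hax' hay'
          (fun h => hne (congrArg Subtype.val h))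
        obtain ⟨p, hp⟩ := walk_ofInduce q
        refine ⟨p, ?_⟩
        intro v hv hmem
        obtain ⟨⟨w, hwC⟩, hwsupp, rfl⟩ := hp v hv
        obtain ⟨h1, h2⟩ := hmem
        have c1 : (⟨w, hwC⟩ : C) ∈ closedNbhd (G.induce C) ⟨u, huC⟩ := by
          simp only [closedNbhd, Set.mem_insert_iff] at h1 ⊢
          rcases h1 with h1 | h1
          · exact Or.inl (Subtype.ext h1)
          · exact Or.inr (by simpa using h1)
        have c2 : (⟨w, hwC⟩ : C) ∉ ({⟨x, hx⟩, ⟨y, hy⟩} : Set C) := by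
          intro hm
          rcases hm with hm | hm
          · exact h2 (Or.inl (congrArg Subtype.val hm))
          · rw [Set.mem_singleton_iff] at hm
            exact h2 (Or.inr (Set.mem_singleton_iff.2 (congrArg Subtype.val hm)))
        exact hq ⟨w, hwC⟩ hwsupp ⟨c1, c2⟩
      · have hadj : G.Adj x y := hout y hy x hx hne
        refine ⟨hadj.toWalk, ?_⟩
        intro v hv hmem
        simp only [Adj.toWalk, Walk.support_cons, Walk.support_nil, List.mem_cons,
          List.mem_singleton] at hv
        rcases hv with rfl | rfl | h
        · exact hmem.2 (Set.mem_insert _ _)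
        · exact hmem.2 (Set.mem_insert_of_mem _ rfl)
        · exact absurd h List.not_mem_nil
    · by_cases hy : y ∈ C
      · have hadj : G.Adj y x := hout x hx y hy (Ne.symm hne)
        refine ⟨hadj.symm.toWalk, ?_⟩
        intro v hv hmem
        simp only [Adj.toWalk, Walk.support_cons, Walk.support_nil, List.mem_cons,
          List.mem_singleton] at hv
        rcases hv with rfl | rfl | h
        · exact hmem.2 (Set.mem_insert _ _)
        · exact hmem.2 (Set.mem_insert_of_mem _ rfl)
        · exact absurd h List.not_mem_nil
      · -- both outside C: route through a non-neighbor of u inside C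
        obtain ⟨c, hc, hcu⟩ := hnt.exists_ne u
        obtain ⟨w, hw⟩ : ∃ w, Gᶜ.Adj u w := by
          obtain ⟨p⟩ := (hc : Gᶜ.Reachable u c)
          cases p with
          | nil => exact absurd rfl (Ne.symm hcu)
          | cons h _ => exact ⟨_, h⟩
        have hwC : w ∈ C := hw.reachable
        have hwx : G.Adj w x := hout x hx w hwC (fun h => hx (h ▸ hwC))
        have hwy : G.Adj w y := hout y hy w hwC (fun h => hy (h ▸ hwC))
        refine ⟨Walk.cons hwx.symm hwy.toWalk, ?_⟩
        intro v hv hmem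
        simp only [Adj.toWalk, Walk.support_cons, Walk.support_nil, List.mem_cons,
          List.mem_singleton] at hv
        obtain ⟨h1, h2⟩ := hmem
        rcases hv with rfl | rfl | rfl | h
        · exact h2 (Set.mem_insert _ _)
        · rcases h1 with h1 | h1
          · exact hw.ne h1.symm
          · exact hw.2 h1
        · exact h2 (Set.mem_insert_of_mem _ rfl)
        · exact absurd h List.not_mem_nil
end

section
/- Let G be a finite simple graph, w a universal vertex of G, and u a vertex distinct from w. Then u is avoidable in G if and only if u is avoidable in G − w. -/
open SimpleGraph

lemma lift_walk {V : Type*} (G : SimpleGraph V) (w : V) :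
    ∀ {x y : V} (p : G.Walk x y) (h : ∀ v ∈ p.support, v ≠ w)
      (hx : x ≠ w) (hy : y ≠ w),
      ∃ q : (G.induce {v | v ≠ w}).Walk ⟨x, hx⟩ ⟨y, hy⟩,
        q.support.map Subtype.val = p.support := by
  intro x y p
  induction p with
  | nil => intro _ hx _; exact ⟨SimpleGraph.Walk.nil, rfl⟩
  | cons h' p ih =>
    intro hsup hx hy
    rename_i a b c
    have hb : b ≠ w := hsup b (by simp [SimpleGraph.Walk.support_cons])
    obtain ⟨q, hq⟩ := ih (fun v hv => hsup v (by simp [SimpleGraph.Walk.support_cons, hv])) hb hy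
    refine ⟨SimpleGraph.Walk.cons ?_ q, ?_⟩
    · exact h'
    · exact congrArg (List.cons a) hq

theorem avoidable_iff_avoidable_delete_universal {V : Type*} [Fintype V]
    (G : SimpleGraph V) (w : V) (hw : ∀ v : V, v ≠ w → G.Adj w v)
    (u : V) (hu : u ≠ w) :
    Avoidable G u ↔ Avoidable (G.induce {v | v ≠ w}) ⟨u, hu⟩ := by
  have hwu : G.Adj u w := (hw u hu).symm
  constructor
  · intro h x y hx hy hxy
    have hx' : G.Adj u x.val := hx
    have hy' : G.Adj u y.val := hy
    have hxy' : x.val ≠ y.val := fun e => hxy (Subtype.ext e)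
    obtain ⟨p, hp⟩ := h x.val y.val hx' hy' hxy'
    have hnw : ∀ v ∈ p.support, v ≠ w := by
      intro v hv hvw
      subst hvw
      exact hp v hv ⟨Or.inr hwu, by
        simp only [Set.mem_insert_iff, Set.mem_singleton_iff]
        push_neg
        exact ⟨fun e => x.2 e.symm, fun e => y.2 e.symm⟩⟩
    obtain ⟨q, hq⟩ := lift_walk G w p hnw x.2 y.2
    refine ⟨q, ?_⟩
    intro v hv ⟨hv1, hv2⟩
    have hvp : v.val ∈ p.support := by
      rw [← hq]; exact List.mem_map_of_mem (f := Subtype.val) hv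
    refine hp v.val hvp ⟨?_, ?_⟩
    · rcases hv1 with h1 | h1
      · exact Or.inl (congrArg Subtype.val h1)
      · exact Or.inr h1
    · simp only [Set.mem_insert_iff, Set.mem_singleton_iff] at hv2 ⊢
      push_neg at hv2 ⊢
      exact ⟨fun e => hv2.1 (Subtype.ext e), fun e => hv2.2 (Subtype.ext e)⟩
  · intro h x y hx hy hxy
    by_cases hxw : x = w
    · subst hxw
      have hyw : y ≠ x := fun e => hxy e.symm
      refine ⟨SimpleGraph.Walk.cons (hw y hyw) SimpleGraph.Walk.nil, ?_⟩
      intro v hv ⟨_, hv2⟩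
      simp only [SimpleGraph.Walk.support_cons, SimpleGraph.Walk.support_nil,
        List.mem_cons, List.mem_singleton] at hv
      apply hv2
      rcases hv with h1 | h1 | h1
      · exact Or.inl h1
      · exact Or.inr h1
      · exact absurd h1 (by simp)
    · by_cases hyw : y = w
      · subst hyw
        refine ⟨SimpleGraph.Walk.cons ((hw x hxw).symm) SimpleGraph.Walk.nil, ?_⟩
        intro v hv ⟨_, hv2⟩
        simp only [SimpleGraph.Walk.support_cons, SimpleGraph.Walk.support_nil,
          List.mem_cons, List.mem_singleton] at hv
        apply hv2
        rcases hv with h1 | h1 | h1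
        · exact Or.inl h1
        · exact Or.inr h1
        · exact absurd h1 (by simp)
      · have hax : (G.induce {v | v ≠ w}).Adj ⟨u, hu⟩ ⟨x, hxw⟩ := hx
        have hay : (G.induce {v | v ≠ w}).Adj ⟨u, hu⟩ ⟨y, hyw⟩ := hy
        obtain ⟨q, hq⟩ := h ⟨x, hxw⟩ ⟨y, hyw⟩ hax hay
          (fun e => hxy (congrArg Subtype.val e))
        refine ⟨q.map (SimpleGraph.Embedding.induce _).toHom, ?_⟩
        intro v hv ⟨hv1, hv2⟩
        replace hv : v ∈ q.support.map (SimpleGraph.Embedding.induce (G := G) {v | v ≠ w}).toHom := by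
          rw [← SimpleGraph.Walk.support_map]; exact hv
        obtain ⟨s, hs, rfl⟩ := List.mem_map.mp hv
        have hsw : ((SimpleGraph.Embedding.induce (G := G) {v | v ≠ w}).toHom) s = s.val := rfl
        rw [hsw] at hv1 hv2
        refine hq s hs ⟨?_, ?_⟩
        · rcases hv1 with h1 | h1
          · exact Or.inl (Subtype.ext h1)
          · exact Or.inr h1
        · simp only [Set.mem_insert_iff, Set.mem_singleton_iff] at hv2 ⊢
          push_neg at hv2 ⊢
          exact ⟨fun e => hv2.1 (congrArg Subtype.val e),
                 fun e => hv2.2 (congrArg Subtype.val e)⟩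
end

section
/- Let G be a chordal finite simple graph. Then a vertex u of G is avoidable if and only if u is simplicial. -/
open SimpleGraph

/-- A vertex is simplicial if its neighborhood induces a clique. -/
def Simplicial {V : Type*} (G : SimpleGraph V) (u : V) : Prop :=
  ∀ x y : V, G.Adj u x → G.Adj u y → x ≠ y → G.Adj x y

/-- A graph is chordal if it contains no induced cycle of length at least 4. -/
def Chordal {V : Type*} (H : SimpleGraph V) : Prop :=
  ∀ n : ℕ, 4 ≤ n → IsEmpty (cycleGraph n ↪g H)

namespace SimpleGraph.Walk
variable {V : Type*} {G : SimpleGraph V}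

/-- The first `n` steps of a walk. -/
def takeW : ∀ {x y : V}, (p : G.Walk x y) → (n : ℕ) → G.Walk x (p.getVert n)
  | _, _, .nil, _ => .nil
  | _, _, .cons _ _, 0 => .nil
  | _, _, .cons h q, n + 1 => .cons h (takeW q n)

/-- The walk after the first `n` steps. -/
def dropW : ∀ {x y : V}, (p : G.Walk x y) → (n : ℕ) → G.Walk (p.getVert n) y
  | _, _, .nil, _ => .nil
  | _, _, .cons h q, 0 => .cons h q
  | _, _, .cons _ q, n + 1 => dropW q n

lemma takeW_length : ∀ {x y : V} (p : G.Walk x y) (n : ℕ), (p.takeW n).length = min n p.length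
  | _, _, .nil, n => by simp [takeW]
  | _, _, .cons _ q, 0 => by simp [takeW]; rfl
  | _, _, .cons h q, n + 1 => by
      simp [takeW, takeW_length q n]

lemma dropW_length : ∀ {x y : V} (p : G.Walk x y) (n : ℕ), (p.dropW n).length = p.length - n
  | _, _, .nil, n => by simp [dropW]
  | _, _, .cons _ q, 0 => by simp [dropW]; rfl
  | _, _, .cons h q, n + 1 => by
      simp [dropW, dropW_length q n]

lemma takeW_support_subset : ∀ {x y : V} (p : G.Walk x y) (n : ℕ),
    ∀ v ∈ (p.takeW n).support, v ∈ p.support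
  | _, _, .nil, n => by simp [takeW]
  | _, _, .cons _ q, 0 => by
      simp [takeW]; intro v hv; exact Or.inl (List.mem_singleton.1 hv)
  | _, _, .cons h q, n + 1 => by
      intro v hv
      rcases (by simpa [takeW] using hv) with rfl | hv
      · simp
      · simp [takeW_support_subset q n v hv]

lemma dropW_support_subset : ∀ {x y : V} (p : G.Walk x y) (n : ℕ),
    ∀ v ∈ (p.dropW n).support, v ∈ p.support
  | _, _, .nil, n => fun v hv => hv
  | _, _, .cons _ q, 0 => by simp [dropW]; intro v hv; exact List.mem_cons.1 hv
  | _, _, .cons h q, n + 1 => by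
      intro v hv
      have := dropW_support_subset q n v (by simpa [dropW] using hv)
      simp [this]

lemma support_eq_map_getVert : ∀ {x y : V} (p : G.Walk x y),
    p.support = (List.range (p.length + 1)).map p.getVert
  | _, _, .nil => by simp [getVert]
  | _, _, .cons h q => by
      have hf : (cons h q).getVert ∘ Nat.succ = q.getVert :=
        funext fun k => getVert_cons_succ q h
      rw [length_cons, List.range_succ_eq_map, List.map_cons, List.map_map, hf,
        getVert_zero, support_cons, support_eq_map_getVert q]

lemma getVert_mem_support' {x y : V} (p : G.Walk x y) {n : ℕ} (hn : n ≤ p.length) :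
    p.getVert n ∈ p.support := by
  rw [support_eq_map_getVert]
  exact List.mem_map_of_mem (List.mem_range.2 (by omega))

lemma IsPath.getVert_inj {x y : V} {p : G.Walk x y} (hp : p.IsPath) {a b : ℕ}
    (ha : a ≤ p.length) (hb : b ≤ p.length) (h : p.getVert a = p.getVert b) : a = b := by
  have hnd := hp.support_nodup
  rw [support_eq_map_getVert] at hnd
  exact List.inj_on_of_nodup_map hnd (List.mem_range.2 (by omega)) (List.mem_range.2 (by omega)) h

end SimpleGraph.Walk

theorem avoidable_iff_simplicial_of_chordal {V : Type*} [Fintype V]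
    (G : SimpleGraph V) (hG : Chordal G) (u : V) :
    Avoidable G u ↔ Simplicial G u := by
  classical
  constructor
  · intro hav x y hx hy hxy
    by_contra hnadj
    have hxu : u ≠ x := hx.ne
    have hyu : u ≠ y := hy.ne
    obtain ⟨p₀, hp₀⟩ := hav x y hx hy hxy
    have hex : ∃ n : ℕ, ∃ p : G.Walk x y, p.length = n ∧
        ∀ v ∈ p.support, v ∉ closedNbhd G u \ ({x, y} : Set V) := ⟨p₀.length, p₀, rfl, hp₀⟩
    obtain ⟨p₁, hp₁len, hp₁av⟩ := Nat.find_spec hex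
    set p : G.Walk x y := p₁.bypass with hpdef
    have hpath : p.IsPath := p₁.bypass_isPath
    have hav' : ∀ v ∈ p.support, v ∉ closedNbhd G u \ ({x, y} : Set V) :=
      fun v hv => hp₁av v (p₁.support_bypass_subset hv)
    have hmin : ∀ q : G.Walk x y,
        (∀ v ∈ q.support, v ∉ closedNbhd G u \ ({x, y} : Set V)) → Nat.find hex ≤ q.length := by
      intro q hq
      by_contra hlt
      exact Nat.find_min hex (by omega) ⟨q, rfl, hq⟩
    have hplen : p.length = Nat.find hex :=
      le_antisymm (hp₁len ▸ p₁.length_bypass_le) (hmin p hav')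
    set m := p.length with hmdef
    have hm2 : 2 ≤ m := by
      have hm0 : m ≠ 0 := fun h => hxy (p.eq_of_length_eq_zero h)
      have hm1 : m ≠ 1 := fun h => hnadj (Walk.adj_of_length_eq_one h)
      omega
    have hgv0 : p.getVert 0 = x := p.getVert_zero
    have hgvm : p.getVert m = y := p.getVert_length
    have hinj : ∀ a b : ℕ, a ≤ m → b ≤ m → p.getVert a = p.getVert b → a = b :=
      fun a b ha hb h => Walk.IsPath.getVert_inj hpath ha hb h
    have hune : ∀ k : ℕ, k ≤ m → p.getVert k ≠ u := by
      intro k hk h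
      have hmem := p.getVert_mem_support' hk
      rw [h] at hmem
      exact hav' u hmem ⟨Set.mem_insert _ _, by
        simp only [Set.mem_insert_iff, Set.mem_singleton_iff]
        rintro (h' | h')
        exacts [hxu h', hyu h']⟩
    have hchord : ∀ a b : ℕ, a + 1 < b → b ≤ m → ¬ G.Adj (p.getVert a) (p.getVert b) := by
      intro a b hab hbm hadj
      set q : G.Walk x y := (p.takeW a).append (Walk.cons hadj (p.dropW b)) with hq
      have hqav : ∀ v ∈ q.support, v ∉ closedNbhd G u \ ({x, y} : Set V) := by
        intro v hv
        apply hav'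
        rw [hq, Walk.support_append] at hv
        rcases List.mem_append.1 hv with hv | hv
        · exact p.takeW_support_subset a v hv
        · rw [Walk.support_cons, List.tail_cons] at hv
          exact p.dropW_support_subset b v hv
      have hql : q.length = min a m + 1 + (m - b) := by
        simp [hq, Walk.length_append, Walk.takeW_length, Walk.dropW_length]
        omega
      have := hmin q hqav
      omega
    have huadj : ∀ k : ℕ, k ≤ m → (G.Adj u (p.getVert k) ↔ (k = 0 ∨ k = m)) := by
      intro k hk
      constructor
      · intro h
        by_contra hcon
        push_neg at hcon
        have hmem := p.getVert_mem_support' hk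
        have hnb : p.getVert k ∈ closedNbhd G u := Set.mem_insert_of_mem _ h
        have hin : p.getVert k ∈ ({x, y} : Set V) := by
          by_contra hxy'
          exact hav' _ hmem ⟨hnb, hxy'⟩
        rcases hin with h' | h'
        · exact hcon.1 (hinj k 0 hk (by omega) (by rw [hgv0]; exact h'))
        · exact hcon.2 (hinj k m hk le_rfl (by rw [hgvm]; exact h'))
      · rintro (rfl | rfl)
        · rw [hgv0]; exact hx
        · rw [hgvm]; exact hy
    have hpadj : ∀ a b : ℕ, a ≤ m → b ≤ m →
        (G.Adj (p.getVert a) (p.getVert b) ↔ (b = a + 1 ∨ a = b + 1)) := by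
      intro a b ha hb
      constructor
      · intro h
        rcases Nat.lt_trichotomy a b with hlt | heq | hgt
        · left
          by_contra hc
          exact hchord a b (by omega) hb h
        · exfalso
          rw [heq] at h
          exact G.irrefl h
        · right
          by_contra hc
          exact hchord b a (by omega) ha h.symm
      · rintro (rfl | rfl)
        · exact p.adj_getVert_succ (by omega)
        · exact (p.adj_getVert_succ (by omega)).symm
    have hiso : IsEmpty (cycleGraph (m + 2) ↪g G) := hG (m + 2) (by omega)
    apply hiso.false
    set f : Fin (m + 2) → V := fun i => if i.val = 0 then u else p.getVert (i.val - 1) with hf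
    have hsub : ∀ i j : Fin (m + 2),
        (i - j = 1) ↔ (i.val = j.val + 1 ∨ (j.val = m + 1 ∧ i.val = 0)) := by
      intro i j
      rw [sub_eq_iff_eq_add, Fin.ext_iff, Fin.val_add, Fin.val_one]
      have hjv : j.val < m + 2 := j.isLt
      have hiv : i.val < m + 2 := i.isLt
      by_cases h : j.val = m + 1
      · rw [h, show 1 + (m + 1) = m + 2 by omega, Nat.mod_self]
        omega
      · rw [Nat.mod_eq_of_lt (by omega)]
        omega
    refine ⟨⟨f, ?_⟩, ?_⟩
    · intro i j hij
      have hiv : i.val < m + 2 := i.isLt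
      have hjv : j.val < m + 2 := j.isLt
      simp only [hf] at hij
      by_cases hi : i.val = 0 <;> by_cases hj : j.val = 0
      · exact Fin.ext (by omega)
      · rw [if_pos hi, if_neg hj] at hij
        exact absurd hij.symm (hune (j.val - 1) (by omega))
      · rw [if_neg hi, if_pos hj] at hij
        exact absurd hij (hune (i.val - 1) (by omega))
      · rw [if_neg hi, if_neg hj] at hij
        exact Fin.ext (by have := hinj (i.val - 1) (j.val - 1) (by omega) (by omega) hij; omega)
    · intro i j
      have hiv : i.val < m + 2 := i.isLt
      have hjv : j.val < m + 2 := j.isLt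
      show G.Adj (f i) (f j) ↔ (cycleGraph (m + 2)).Adj i j
      rw [cycleGraph_adj, hsub i j, hsub j i]
      by_cases hi : i.val = 0 <;> by_cases hj : j.val = 0
      · simp only [hf, if_pos hi, if_pos hj]
        constructor
        · intro h
          exact absurd h G.irrefl
        · intro h
          exfalso; omega
      · simp only [hf, if_pos hi, if_neg hj]
        rw [huadj (j.val - 1) (by omega)]
        omega
      · simp only [hf, if_pos hj, if_neg hi]
        rw [G.adj_comm, huadj (i.val - 1) (by omega)]
        omega
      · simp only [hf, if_neg hi, if_neg hj]
        rw [hpadj (i.val - 1) (j.val - 1) (by omega) (by omega)]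
        omega
  · intro hs x y hx hy hxy
    refine ⟨Walk.cons (hs x y hx hy hxy) Walk.nil, ?_⟩
    intro v hv
    simp only [Walk.support_cons, Walk.support_nil, List.mem_cons,
      List.not_mem_nil, or_false] at hv
    rintro ⟨-, hmem⟩
    apply hmem
    rcases hv with rfl | rfl
    · exact Set.mem_insert _ _
    · exact Set.mem_insert_of_mem _ rfl
end

section
/- A vertex u of a finite simple graph G is avoidable if and only if every vertex x ∈ N(u) protects u, where x protects u means: for every z ∈ N(u) \ {x}, either xz is an edge or there is a path from x to z all of whose internal vertices lie outside N[u]. -/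
open SimpleGraph

/-- `x` protects `u`: for every other neighbor `z` of `u`, either `xz` is an
edge or there is a path from `x` to `z` whose internal vertices avoid `N[u]`. -/
def Protects {V : Type*} (G : SimpleGraph V) (x u : V) : Prop :=
  ∀ z : V, G.Adj u z → z ≠ x →
    (G.Adj x z ∨
      ∃ p : G.Walk x z, ∀ v ∈ p.support, v ≠ x → v ≠ z → v ∉ closedNbhd G u)

theorem avoidable_iff_all_neighbors_protect {V : Type*} [Fintype V]
    (G : SimpleGraph V) (u : V) :
    Avoidable G u ↔ ∀ x : V, G.Adj u x → Protects G x u := by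
  constructor
  · intro h x hx z hz hzx
    right
    obtain ⟨p, hp⟩ := h x z hx hz hzx.symm
    refine ⟨p, fun v hv hvx hvz hvc => hp v hv ⟨hvc, ?_⟩⟩
    simp [hvx, hvz]
  · intro h x y hx hy hxy
    rcases h x hx y hy hxy.symm with hadj | ⟨p, hp⟩
    · refine ⟨hadj.toWalk, fun v hv => ?_⟩
      simp only [SimpleGraph.Adj.toWalk, SimpleGraph.Walk.support_cons,
        SimpleGraph.Walk.support_nil, List.mem_cons, List.mem_singleton] at hv
      rintro ⟨_, hmem⟩
      rcases hv with rfl | rfl | h'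
      · exact hmem (Or.inl rfl)
      · exact hmem (Or.inr rfl)
      · exact absurd h' List.not_mem_nil
    · refine ⟨p, fun v hv => ?_⟩
      rintro ⟨hc, hmem⟩
      simp only [Set.mem_insert_iff, Set.mem_singleton_iff, not_or] at hmem
      exact hp v hv hmem.1 hmem.2 hc
end

section
/- Let G be a finite simple graph, u a vertex, and let G_u be the graph obtained from G by contracting each connected component of G − N[u] into a single vertex (a contracted vertex C is adjacent to exactly the vertices of N(u) having a neighbor in the component). Then u is avoidable in G if and only if u is avoidable in G_u. -/
open SimpleGraph

/-- The graph `G_u` obtained from `G` by contracting each connected component of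
`G − N[u]` into a single vertex. Its vertices are the vertices of `N[u]`
together with one vertex for each connected component of `G − N[u]`; a
contracted vertex is adjacent to exactly the vertices of `N(u)` having a
neighbor in the corresponding component. -/
def contractGraph {V : Type*} (G : SimpleGraph V) (u : V) :
    SimpleGraph ((closedNbhd G u : Set V) ⊕
      (G.induce (closedNbhd G u)ᶜ).ConnectedComponent) where
  Adj a b :=
    match a, b with
    | .inl a, .inl b => G.Adj a b
    | .inl a, .inr c => ∃ w : ((closedNbhd G u)ᶜ : Set V),
        (G.induce (closedNbhd G u)ᶜ).connectedComponentMk w = c ∧ G.Adj a w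
    | .inr c, .inl b => ∃ w : ((closedNbhd G u)ᶜ : Set V),
        (G.induce (closedNbhd G u)ᶜ).connectedComponentMk w = c ∧ G.Adj b w
    | .inr _, .inr _ => False
  symm := ⟨by
    rintro (a | c) (b | d) h
    · exact G.adj_symm h
    · exact h
    · exact h
    · exact h.elim⟩
  loopless := ⟨by
    rintro (a | c) h
    · exact G.irrefl h
    · exact h⟩

namespace AvoidAux

variable {V : Type*} (G : SimpleGraph V) (u : V)

open Classical in
noncomputable def fmap (v : V) :
    (closedNbhd G u : Set V) ⊕ (G.induce (closedNbhd G u)ᶜ).ConnectedComponent :=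
  if h : v ∈ closedNbhd G u then .inl ⟨v, h⟩
  else .inr ((G.induce (closedNbhd G u)ᶜ).connectedComponentMk ⟨v, h⟩)

lemma fmap_mem {v : V} (h : v ∈ closedNbhd G u) : fmap G u v = .inl ⟨v, h⟩ := by unfold fmap; exact dif_pos h

lemma fmap_not_mem {v : V} (h : v ∉ closedNbhd G u) :
    fmap G u v = .inr ((G.induce (closedNbhd G u)ᶜ).connectedComponentMk ⟨v, h⟩) := by unfold fmap; exact dif_neg h

lemma inl_adj {a b : (closedNbhd G u : Set V)} :
    (contractGraph G u).Adj (.inl a) (.inl b) ↔ G.Adj a b := Iff.rfl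

/-- adjacency in `G` yields equality or adjacency in the contracted graph. -/
lemma fmap_adj {a b : V} (hab : G.Adj a b) :
    fmap G u a = fmap G u b ∨ (contractGraph G u).Adj (fmap G u a) (fmap G u b) := by
  by_cases ha : a ∈ closedNbhd G u <;> by_cases hb : b ∈ closedNbhd G u
  · right; rw [fmap_mem G u ha, fmap_mem G u hb]; exact hab
  · right; rw [fmap_mem G u ha, fmap_not_mem G u hb]; exact ⟨⟨b, hb⟩, rfl, hab⟩
  · right; rw [fmap_not_mem G u ha, fmap_mem G u hb]; exact ⟨⟨a, ha⟩, rfl, hab.symm⟩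
  · left
    rw [fmap_not_mem G u ha, fmap_not_mem G u hb]
    have : (G.induce (closedNbhd G u)ᶜ).Adj ⟨a, ha⟩ ⟨b, hb⟩ := hab
    exact congrArg _ (ConnectedComponent.sound this.reachable)

/-- Push a walk of `G` forward to the contracted graph. -/
lemma fmap_walk {a b : V} (p : G.Walk a b) :
    ∃ q : (contractGraph G u).Walk (fmap G u a) (fmap G u b),
      ∀ z ∈ q.support, ∃ v ∈ p.support, z = fmap G u v := by
  induction p with
  | nil => exact ⟨.nil, by simp⟩
  | @cons a a' b h p ih =>
    obtain ⟨q, hq⟩ := ih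
    rcases fmap_adj G u h with he | hadj
    · refine ⟨q.copy he.symm rfl, ?_⟩
      intro z hz
      rw [Walk.support_copy] at hz
      obtain ⟨v, hv, rfl⟩ := hq z hz
      exact ⟨v, by simp [hv], rfl⟩
    · refine ⟨.cons hadj q, ?_⟩
      intro z hz
      rw [Walk.support_cons, List.mem_cons] at hz
      rcases hz with rfl | hz
      · exact ⟨a, by simp, rfl⟩
      · obtain ⟨v, hv, rfl⟩ := hq z hz
        exact ⟨v, by simp [hv], rfl⟩


lemma inl_mem_closedNbhd_contract (a : (closedNbhd G u : Set V)) :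
    (Sum.inl a : (closedNbhd G u : Set V) ⊕ (G.induce (closedNbhd G u)ᶜ).ConnectedComponent)
      ∈ closedNbhd (contractGraph G u) (Sum.inl ⟨u, Set.mem_insert u _⟩) := by
  rcases Set.mem_insert_iff.mp a.2 with h | h
  · exact Set.mem_insert_iff.mpr (Or.inl (congrArg Sum.inl (Subtype.ext h)))
  · exact Set.mem_insert_of_mem _ (by exact h)

lemma inr_not_mem_closedNbhd_contract (c : (G.induce (closedNbhd G u)ᶜ).ConnectedComponent) :
    (Sum.inr c : (closedNbhd G u : Set V) ⊕ (G.induce (closedNbhd G u)ᶜ).ConnectedComponent)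
      ∉ closedNbhd (contractGraph G u) (Sum.inl ⟨u, Set.mem_insert u _⟩) := by
  intro h
  rcases Set.mem_insert_iff.mp h with h | h
  · cases h
  · obtain ⟨w, -, hw⟩ := h
    exact w.2 (Set.mem_insert_of_mem _ hw)

lemma head_ok {x y : V} (hx : x ∈ closedNbhd G u) (hy : y ∈ closedNbhd G u)
    (a : (closedNbhd G u : Set V))
    (h : (Sum.inl a : (closedNbhd G u : Set V) ⊕ _)
        ∉ closedNbhd (contractGraph G u) (Sum.inl ⟨u, Set.mem_insert u _⟩) \
        ({Sum.inl ⟨x, hx⟩, Sum.inl ⟨y, hy⟩} : Set _)) :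
    (a : V) ∉ closedNbhd G u \ ({x, y} : Set V) := by
  rintro ⟨h1, h2⟩
  apply h
  refine ⟨inl_mem_closedNbhd_contract G u a, ?_⟩
  rintro (ha | ha) <;> apply h2
  · exact Or.inl (congrArg Subtype.val (Sum.inl.inj ha))
  · exact Or.inr (congrArg Subtype.val (Sum.inl.inj ha))

lemma exists_walk_of_comp_eq {w w' : ((closedNbhd G u)ᶜ : Set V)}
    (h : (G.induce (closedNbhd G u)ᶜ).connectedComponentMk w =
      (G.induce (closedNbhd G u)ᶜ).connectedComponentMk w') :
    ∃ p : G.Walk ↑w ↑w', ∀ v ∈ p.support, v ∈ ((closedNbhd G u)ᶜ : Set V) := by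
  obtain ⟨q⟩ := ConnectedComponent.exact h
  refine ⟨q.map (Embedding.induce (closedNbhd G u)ᶜ).toHom, ?_⟩
  intro v hv
  have hv : v ∈ (q.map (Embedding.induce (closedNbhd G u)ᶜ).toHom).support := hv
  rw [Walk.support_map, List.mem_map] at hv
  obtain ⟨z, -, rfl⟩ := hv
  exact z.2

lemma pull_walk {x y : V} (hx : G.Adj u x) (hy : G.Adj u y) :
    ∀ (z zend : (closedNbhd G u : Set V) ⊕ (G.induce (closedNbhd G u)ᶜ).ConnectedComponent)
      (q : (contractGraph G u).Walk z zend),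
      zend = Sum.inl ⟨y, Set.mem_insert_of_mem _ hy⟩ →
      (∀ w ∈ q.support, w ∉ closedNbhd (contractGraph G u) (Sum.inl ⟨u, Set.mem_insert u _⟩) \
        ({Sum.inl ⟨x, Set.mem_insert_of_mem _ hx⟩,
          Sum.inl ⟨y, Set.mem_insert_of_mem _ hy⟩} : Set _)) →
      (match z with
       | .inl a => ∃ p : G.Walk ↑a y, ∀ v ∈ p.support, v ∉ closedNbhd G u \ ({x, y} : Set V)
       | .inr c => ∀ w : ((closedNbhd G u)ᶜ : Set V),
            (G.induce (closedNbhd G u)ᶜ).connectedComponentMk w = c →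
            ∃ p : G.Walk ↑w y, ∀ v ∈ p.support, v ∉ closedNbhd G u \ ({x, y} : Set V)) := by
  intro z zend q
  induction q with
  | nil =>
    rintro rfl _
    exact ⟨Walk.nil, by simp⟩
  | @cons z z' _ h q ih =>
    rintro rfl havoid
    have ih := ih rfl
    have havoid' := fun w hw => havoid w (by rw [Walk.support_cons]; exact List.mem_cons_of_mem _ hw)
    have hhead := havoid z (by rw [Walk.support_cons]; exact List.mem_cons_self)
    match z, z', h with
    | .inl a, .inl b, h =>
      obtain ⟨p, hp⟩ := ih havoid'
      refine ⟨Walk.cons (show G.Adj a b from h) p, ?_⟩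
      intro v hv
      rw [Walk.support_cons, List.mem_cons] at hv
      rcases hv with rfl | hv
      · exact head_ok G u _ _ a hhead
      · exact hp v hv
    | .inl a, .inr c, h =>
      obtain ⟨w, hwc, hadj⟩ := h
      obtain ⟨p, hp⟩ := ih havoid' w hwc
      refine ⟨Walk.cons hadj p, ?_⟩
      intro v hv
      rw [Walk.support_cons, List.mem_cons] at hv
      rcases hv with rfl | hv
      · exact head_ok G u _ _ a hhead
      · exact hp v hv
    | .inr c, .inl b, h =>
      intro w hwc
      obtain ⟨w', hw'c, hadj⟩ := h
      obtain ⟨r, hr⟩ := exists_walk_of_comp_eq G u (hwc.trans hw'c.symm)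
      obtain ⟨p, hp⟩ := ih havoid'
      refine ⟨r.append (Walk.cons hadj.symm p), ?_⟩
      intro v hv
      rw [Walk.support_append, List.mem_append] at hv
      rcases hv with hv | hv
      · exact fun hbad => hr v hv hbad.1
      · exact hp v (by rw [Walk.support_cons] at hv; exact hv)

end AvoidAux

open AvoidAux in
theorem avoidable_iff_avoidable_contractGraph {V : Type*} [Fintype V]
    (G : SimpleGraph V) (u : V) :
    Avoidable G u ↔
      Avoidable (contractGraph G u) (Sum.inl ⟨u, Set.mem_insert u _⟩) := by
  constructor
  · intro hA X Y hX hY hXY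
    obtain (a | c) := X
    swap
    · obtain ⟨w, -, hw⟩ := hX
      exact absurd (Set.mem_insert_of_mem _ hw) w.2
    obtain (b | c) := Y
    swap
    · obtain ⟨w, -, hw⟩ := hY
      exact absurd (Set.mem_insert_of_mem _ hw) w.2
    have hux : G.Adj u ↑a := hX
    have huy : G.Adj u ↑b := hY
    have hab : (a : V) ≠ ↑b := fun h => hXY (by rw [Subtype.ext h])
    obtain ⟨p, hp⟩ := hA ↑a ↑b hux huy hab
    obtain ⟨q, hq⟩ := fmap_walk G u p
    refine ⟨q.copy (fmap_mem G u a.2) (fmap_mem G u b.2), ?_⟩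
    intro z hz
    rw [Walk.support_copy] at hz
    obtain ⟨v, hv, rfl⟩ := hq z hz
    have hv' := hp v hv
    by_cases hmem : v ∈ closedNbhd G u
    · rw [fmap_mem G u hmem]
      have : v ∈ ({(a : V), ↑b} : Set V) := by
        by_contra hvv
        exact hv' ⟨hmem, hvv⟩
      rintro ⟨-, hbad⟩
      apply hbad
      rcases this with rfl | rfl
      · exact Or.inl rfl
      · exact Or.inr rfl
    · rw [fmap_not_mem G u hmem]
      exact fun hbad => inr_not_mem_closedNbhd_contract G u _ hbad.1
  · intro hA x y hux huy hxy
    have hX : (contractGraph G u).Adj (Sum.inl ⟨u, Set.mem_insert u _⟩)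
        (Sum.inl ⟨x, Set.mem_insert_of_mem _ hux⟩) := hux
    have hY : (contractGraph G u).Adj (Sum.inl ⟨u, Set.mem_insert u _⟩)
        (Sum.inl ⟨y, Set.mem_insert_of_mem _ huy⟩) := huy
    have hXY : (Sum.inl ⟨x, Set.mem_insert_of_mem _ hux⟩ :
        (closedNbhd G u : Set V) ⊕ (G.induce (closedNbhd G u)ᶜ).ConnectedComponent) ≠
        Sum.inl ⟨y, Set.mem_insert_of_mem _ huy⟩ :=
      fun h => hxy (congrArg Subtype.val (Sum.inl.inj h))
    obtain ⟨q, hq⟩ := hA _ _ hX hY hXY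
    exact pull_walk G u hux huy _ _ q rfl hq
end

section
/- Let G be a finite simple graph, u a vertex, and G_u(X,C) the graph obtained from G by contracting each connected component of G − N[u] into a single vertex, where X = N(u) and C is the set of contracted vertices. Then u is avoidable in G if and only if for every pair of distinct vertices x, y ∈ X, either xy is an edge of G or there exists a contracted vertex c ∈ C adjacent to both x and y in G_u. -/
open SimpleGraph

lemma avoid_core {V : Type*} (G : SimpleGraph V) (u : V) :
    ∀ (a y : V) (q : G.Walk a y), G.Adj u y → a ∈ (closedNbhd G u)ᶜ →
      (∀ v ∈ q.support, v ≠ y → v ∈ (closedNbhd G u)ᶜ) →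
      ∃ (ha : a ∈ (closedNbhd G u)ᶜ) (w' : ((closedNbhd G u)ᶜ : Set V)), G.Adj y w' ∧
        (G.induce (closedNbhd G u)ᶜ).Reachable ⟨a, ha⟩ w' := by
  intro a y q
  induction q with
  | nil =>
    intro hy ha _
    exact absurd (Set.mem_insert_iff.mpr (Or.inr hy)) ha
  | @cons a b c h r ih =>
    intro hy ha hsup
    refine ⟨ha, ?_⟩
    by_cases hb : b = c
    · subst hb
      exact ⟨⟨a, ha⟩, h.symm, Reachable.refl _⟩
    · have hb' : b ∈ (closedNbhd G u)ᶜ :=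
        hsup b (by simp [Walk.support_cons]) hb
      obtain ⟨_, w', hadj, hr⟩ := ih hy hb'
        (fun v hv hvy => hsup v (by simp [Walk.support_cons, hv]) hvy)
      refine ⟨w', hadj, Reachable.trans ?_ hr⟩
      exact Adj.reachable (by simpa using h)

/-- `u` is avoidable in `G` iff every two distinct neighbors `x, y` of `u` are
either adjacent in `G` or there is a single connected component of `G − N[u]`
(a contracted vertex of `G_u(X,C)`) containing a neighbor of `x` and a
neighbor of `y`. -/
theorem avoidable_iff_common_component {V : Type*} [Fintype V]
    (G : SimpleGraph V) (u : V) :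
    Avoidable G u ↔
      ∀ x y : V, G.Adj u x → G.Adj u y → x ≠ y →
        (G.Adj x y ∨
          ∃ w w' : ((closedNbhd G u)ᶜ : Set V),
            (G.induce (closedNbhd G u)ᶜ).connectedComponentMk w =
              (G.induce (closedNbhd G u)ᶜ).connectedComponentMk w' ∧
            G.Adj x w ∧ G.Adj y w') := by
  classical
  constructor
  · intro h x y hx hy hxy
    obtain ⟨p, hp⟩ := h x y hx hy hxy
    have key : ∀ (P : G.Walk x y), P.IsPath →
        (∀ v ∈ P.support, v ∉ closedNbhd G u \ ({x, y} : Set V)) →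
        (G.Adj x y ∨
          ∃ w w' : ((closedNbhd G u)ᶜ : Set V),
            (G.induce (closedNbhd G u)ᶜ).connectedComponentMk w =
              (G.induce (closedNbhd G u)ᶜ).connectedComponentMk w' ∧
            G.Adj x w ∧ G.Adj y w') := by
      intro P hP hPs
      cases P with
      | nil => exact absurd rfl hxy
      | @cons x b y hxb r =>
        by_cases hb : b = y
        · subst hb; exact Or.inl hxb
        · right
          have hxnotr : x ∉ r.support := ((Walk.cons_isPath_iff _ _).mp hP).2
          have hbx : b ≠ x := fun hbx => hxnotr (hbx ▸ r.start_mem_support)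
          have hb' : b ∈ (closedNbhd G u)ᶜ := by
            intro hbs
            exact hPs b (by simp [Walk.support_cons]) ⟨hbs, by simp [hbx, hb]⟩
          obtain ⟨_, w', hadj, hr⟩ := avoid_core G u b y r hy hb' (by
            intro v hv hvy
            have hvx : v ≠ x := fun hvx => hxnotr (hvx ▸ hv)
            intro hvs
            exact hPs v (by simp [Walk.support_cons, hv]) ⟨hvs, by simp [hvx, hvy]⟩)
          exact ⟨⟨b, hb'⟩, w', ConnectedComponent.sound hr, hxb, hadj⟩
    exact key p.toPath p.toPath.prop (fun v hv => hp v (Walk.support_toPath_subset p hv))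
  · intro h x y hx hy hxy
    rcases h x y hx hy hxy with hadj | ⟨w, w', hc, hxw, hyw'⟩
    · refine ⟨hadj.toWalk, ?_⟩
      intro v hv
      simp only [Adj.toWalk, Walk.support_cons, Walk.support_nil, List.mem_cons,
        List.mem_singleton] at hv
      rcases hv with rfl | hv
      · simp [Set.mem_diff]
      · simp at hv; subst hv; simp [Set.mem_diff]
    · obtain ⟨q⟩ := ConnectedComponent.exact hc
      let q' : G.Walk (w : V) (w' : V) :=
        q.map (Embedding.induce ((closedNbhd G u)ᶜ : Set V)).toHom
      have hq' : ∀ v ∈ q'.support, v ∈ ((closedNbhd G u)ᶜ : Set V) := by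
        intro v hv
        replace hv : v ∈ q.support.map (Embedding.induce (G := G) ((closedNbhd G u)ᶜ : Set V)).toHom := by
          rw [← Walk.support_map]; exact hv
        rw [List.mem_map] at hv
        obtain ⟨z, _, rfl⟩ := hv
        exact z.2
      refine ⟨Walk.cons hxw (q'.append (Walk.cons hyw'.symm Walk.nil)), ?_⟩
      intro v hv
      rw [Walk.support_cons, List.mem_cons] at hv
      rcases hv with rfl | hv
      · simp [Set.mem_diff]
      · rw [Walk.support_append, List.mem_append] at hv
        rcases hv with hv | hv
        · exact fun hmem => (hq' v hv) hmem.1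
        · simp only [Walk.support_cons, Walk.support_nil, List.tail_cons,
            List.mem_singleton] at hv
          subst hv; simp [Set.mem_diff]
end

section
/- Let xy be an edge of a finite simple graph G and let B(x,y) = N(x) ∩ N(y). Then xy is an avoidable edge in G if and only if xy is a protected edge in G − B(x,y). -/
open SimpleGraph

/-- `a, x, y, b` form an induced `P₄` having `xy` as its middle edge
(the adjacency `G.Adj x y` is recorded separately as `xy` being an edge). -/
def IsMiddleP4 {V : Type*} (G : SimpleGraph V) (x y a b : V) : Prop :=
  G.Adj a x ∧ G.Adj y b ∧ ¬ G.Adj a y ∧ ¬ G.Adj x b ∧ ¬ G.Adj a b ∧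
    a ≠ y ∧ b ≠ x ∧ a ≠ b

/-- A closed walk is an induced cycle if it is a cycle and every adjacency
between vertices on it is an edge of the cycle. -/
def IsInducedCycle {V : Type*} (G : SimpleGraph V) {v : V} (c : G.Walk v v) : Prop :=
  c.IsCycle ∧ ∀ a ∈ c.support, ∀ b ∈ c.support, G.Adj a b → s(a, b) ∈ c.edges

/-- An edge `xy` is avoidable if every induced `P₄` `a,x,y,b` with middle edge
`xy` is contained in an induced cycle. -/
def AvoidableEdge {V : Type*} (G : SimpleGraph V) (x y : V) : Prop :=
  ∀ a b : V, IsMiddleP4 G x y a b →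
    ∃ (v : V) (c : G.Walk v v), IsInducedCycle G c ∧
      a ∈ c.support ∧ x ∈ c.support ∧ y ∈ c.support ∧ b ∈ c.support

/-- An edge `xy` is protected if between every neighbor of `x` and every
neighbor of `y` there is a path whose internal vertices avoid `N[x] ∪ N[y]`. -/
def ProtectedEdge {V : Type*} (G : SimpleGraph V) (x y : V) : Prop :=
  ∀ a b : V, G.Adj x a → G.Adj y b →
    ∃ p : G.Walk a b, ∀ v ∈ p.support, v ≠ a → v ≠ b →
      v ∉ (insert x (G.neighborSet x) ∪ insert y (G.neighborSet y) : Set V)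

section AuxAvoidable

variable {V : Type*} {G : SimpleGraph V}

lemma lift_walk_s16 {s : Set V} :
    ∀ {A B : V} (p : G.Walk A B), (∀ w ∈ p.support, w ∈ s) → ∀ (ha : A ∈ s) (hb : B ∈ s),
      ∃ q : (G.induce s).Walk ⟨A, ha⟩ ⟨B, hb⟩, ∀ w ∈ q.support, (w : V) ∈ p.support := by
  intro A B p
  induction p with
  | nil =>
    intro _ ha hb
    exact ⟨Walk.nil, by simp⟩
  | @cons A c B h₀ q ih =>
    intro hp ha hb
    have hc : c ∈ s := hp c (by simp)
    obtain ⟨q', hq'⟩ := ih (fun w hw => hp w (by simp [hw])) hc hb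
    refine ⟨Walk.cons (by simpa using h₀ : (G.induce s).Adj ⟨A, ha⟩ ⟨c, hc⟩) q', ?_⟩
    intro w hw
    rw [Walk.support_cons, List.mem_cons] at hw
    rcases hw with hw | hw
    · simp [hw]
    · simp [hq' w hw]

lemma shortcut_aux [DecidableEq V] {u v : V} (h : G.Adj u v) :
    ∀ {a b : V} (p : G.Walk a b), u ∈ p.support → v ∈ p.support → s(u, v) ∉ p.edges →
      ∃ r : G.Walk a b, (∀ w ∈ r.support, w ∈ p.support) ∧ r.length < p.length := by
  intro a b p
  induction p with
  | nil =>
    intro hu hv _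
    simp only [Walk.support_nil, List.mem_singleton] at hu hv
    exact absurd (hu.trans hv.symm) h.ne
  | cons h₀ q ih =>
    intro hu hv he
    rw [Walk.support_cons, List.mem_cons] at hu hv
    rw [Walk.edges_cons, List.mem_cons, not_or] at he
    by_cases huq : u ∈ q.support
    · by_cases hvq : v ∈ q.support
      · obtain ⟨r, hr, hl⟩ := ih huq hvq he.2
        refine ⟨Walk.cons h₀ r, ?_, by simpa using hl⟩
        intro w hw
        rw [Walk.support_cons, List.mem_cons] at hw ⊢
        exact hw.imp id (fun hw' => hr w hw')
      · have hva : v = _ := hv.resolve_right hvq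
        subst hva
        refine ⟨Walk.cons h.symm (q.dropUntil u huq), ?_, ?_⟩
        · intro w hw
          rw [Walk.support_cons, List.mem_cons] at hw ⊢
          exact hw.imp id (fun hw' => Walk.support_dropUntil_subset q huq hw')
        · have hlen : (q.takeUntil u huq).length + (q.dropUntil u huq).length = q.length := by
            rw [← Walk.length_append, q.take_spec huq]
          have htu : (q.takeUntil u huq).length ≠ 0 := by
            intro h0
            have h0' := Walk.eq_of_length_eq_zero h0
            subst h0'
            exact he.1 Sym2.eq_swap
          simp only [Walk.length_cons]
          omega
    · have hua : u = _ := hu.resolve_right huq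
      subst hua
      have hvq : v ∈ q.support := by
        rcases hv with hv | hv
        · exact absurd hv.symm h.ne
        · exact hv
      refine ⟨Walk.cons h (q.dropUntil v hvq), ?_, ?_⟩
      · intro w hw
        rw [Walk.support_cons, List.mem_cons] at hw ⊢
        exact hw.imp id (fun hw' => Walk.support_dropUntil_subset q hvq hw')
      · have hlen : (q.takeUntil v hvq).length + (q.dropUntil v hvq).length = q.length := by
          rw [← Walk.length_append, q.take_spec hvq]
        have htu : (q.takeUntil v hvq).length ≠ 0 := by
          intro h0
          have h0' := Walk.eq_of_length_eq_zero h0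
          subst h0'
          exact he.1 rfl
        simp only [Walk.length_cons]
        omega

lemma exists_inducedPath [DecidableEq V] {a b : V} (p : G.Walk a b) :
    ∃ q : G.Walk a b, q.IsPath ∧ (∀ w ∈ q.support, w ∈ p.support) ∧
      ∀ u v, u ∈ q.support → v ∈ q.support → G.Adj u v → s(u, v) ∈ q.edges := by
  by_cases hind : ∀ u v, u ∈ p.bypass.support → v ∈ p.bypass.support → G.Adj u v →
      s(u, v) ∈ p.bypass.edges
  · exact ⟨p.bypass, p.bypass_isPath, fun w hw => p.support_bypass_subset hw, hind⟩
  · push_neg at hind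
    obtain ⟨u, v, hu, hv, hadj, hne⟩ := hind
    obtain ⟨r, hr, hl⟩ := shortcut_aux hadj p.bypass hu hv hne
    have hlt : r.length < p.length := lt_of_lt_of_le hl p.length_bypass_le
    obtain ⟨q, h1, h2, h3⟩ := exists_inducedPath r
    exact ⟨q, h1, fun w hw => p.support_bypass_subset (hr w (h2 w hw)), h3⟩
termination_by p.length

lemma cycle_decomp {x y a b : V} (c : G.Walk x x) (hc : c.IsCycle)
    (hind : ∀ u ∈ c.support, ∀ v ∈ c.support, G.Adj u v → s(u, v) ∈ c.edges)
    (hadjxy : G.Adj x y) (hadjxa : G.Adj x a) (hadjyb : G.Adj y b)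
    (hxaE : s(x, a) ∈ c.edges) (hxyE : s(x, y) ∈ c.edges) (hybE : s(y, b) ∈ c.edges)
    (hay : a ≠ y) (hbx : b ≠ x) :
    ∃ p : G.Walk a b, ∀ w ∈ p.support, w ≠ a → w ≠ b →
      w ≠ x ∧ w ≠ y ∧ ¬ G.Adj x w ∧ ¬ G.Adj y w := by
  cases c with
  | nil => exact absurd rfl hc.ne_nil
  | @cons _ u _ h₀ q =>
    have hqnd : q.support.Nodup := by simpa using hc.support_nodup
    obtain ⟨w, h2, q2, hq2⟩ := Walk.exists_eq_cons_of_ne h₀.ne q.reverse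
    have hrevsup : q.reverse.support = x :: q2.support := by rw [hq2, Walk.support_cons]
    have hnd2 : (x :: q2.support).Nodup := by
      rw [← hrevsup, Walk.support_reverse]
      exact List.nodup_reverse.2 hqnd
    have hxq2 : x ∉ q2.support := (List.nodup_cons.1 hnd2).1
    have hq2nd : q2.support.Nodup := (List.nodup_cons.1 hnd2).2
    have hq2subq : ∀ z ∈ q2.support, z ∈ q.support := by
      intro z hz
      rw [← List.mem_reverse, ← Walk.support_reverse, hrevsup]
      exact List.mem_cons_of_mem _ hz
    have hqe : ∀ e, e ∈ q.edges ↔ e = s(x, w) ∨ e ∈ q2.edges := by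
      intro e
      rw [← List.mem_reverse, ← Walk.edges_reverse, hq2, Walk.edges_cons, List.mem_cons]
    have echar : ∀ z, s(x, z) ∈ (Walk.cons h₀ q).edges → z = u ∨ z = w := by
      intro z hz
      rw [Walk.edges_cons, List.mem_cons] at hz
      rcases hz with hz | hz
      · rcases Sym2.eq_iff.1 hz with ⟨_, h⟩ | ⟨h, _⟩
        · exact Or.inl h
        · exact absurd h h₀.ne
      · rw [hqe] at hz
        rcases hz with hz | hz
        · rcases Sym2.eq_iff.1 hz with ⟨_, h⟩ | ⟨h, _⟩
          · exact Or.inr h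
          · exact absurd h h2.ne
        · exact absurd (Walk.fst_mem_support_of_mem_edges q2 hz) hxq2
    have key : ∃ r : G.Walk y a, r.support.Nodup ∧ x ∉ r.support ∧
        (∀ z ∈ r.support, z ∈ (Walk.cons h₀ q).support) ∧
        (∀ e, e ∈ (Walk.cons h₀ q).edges ↔ e = s(x, a) ∨ e = s(x, y) ∨ e ∈ r.edges) := by
      have hsubsup : ∀ z ∈ q2.support, z ∈ (Walk.cons h₀ q).support := by
        intro z hz
        rw [Walk.support_cons]
        exact List.mem_cons_of_mem _ (hq2subq z hz)
      have hce : ∀ e, e ∈ (Walk.cons h₀ q).edges ↔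
          e = s(x, u) ∨ e = s(x, w) ∨ e ∈ q2.edges := by
        intro e
        rw [Walk.edges_cons, List.mem_cons, hqe]
      rcases echar a hxaE with hau | haw
      · have hyw : y = w := (echar y hxyE).resolve_left (fun h => hay (hau.trans h.symm))
        subst hau; subst hyw
        exact ⟨q2, hq2nd, hxq2, hsubsup, hce⟩
      · have hyu : y = u := (echar y hxyE).resolve_right (fun h => hay (haw.trans h.symm))
        subst haw; subst hyu
        refine ⟨q2.reverse, by rw [Walk.support_reverse]; exact List.nodup_reverse.2 hq2nd, by simpa using hxq2, ?_, ?_⟩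
        · intro z hz
          rw [Walk.support_reverse, List.mem_reverse] at hz
          exact hsubsup z hz
        · intro e
          rw [hce e, Walk.edges_reverse, List.mem_reverse]
          tauto
    obtain ⟨r, hrnd, hxr, hrsub, hiff⟩ := key
    obtain ⟨m, h3, q3, hr3⟩ := Walk.exists_eq_cons_of_ne hay.symm r
    subst hr3
    rw [Walk.support_cons] at hrnd hxr hrsub
    have hynq3 : y ∉ q3.support := (List.nodup_cons.1 hrnd).1
    have hxq3 : x ∉ q3.support := fun h => hxr (List.mem_cons_of_mem _ h)
    have hxny : x ≠ y := hadjxy.ne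
    have hmb : m = b := by
      rcases (hiff s(y, b)).1 hybE with h | h | h
      · rcases Sym2.eq_iff.1 h with ⟨h', _⟩ | ⟨h', hb'⟩
        · exact absurd h' hxny.symm
        · exact absurd h'.symm hay
      · rcases Sym2.eq_iff.1 h with ⟨h', _⟩ | ⟨_, hb'⟩
        · exact absurd h' hxny.symm
        · exact absurd hb' hbx
      · rw [Walk.edges_cons, List.mem_cons] at h
        rcases h with h | h
        · rcases Sym2.eq_iff.1 h with ⟨_, h'⟩ | ⟨h', _⟩
          · exact h'.symm
          · exact absurd h'.symm (fun hh => hynq3 (hh ▸ q3.start_mem_support))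
        · exact absurd (Walk.fst_mem_support_of_mem_edges q3 h) hynq3
    subst hmb
    refine ⟨q3.reverse, ?_⟩
    intro w' hw' hwa hwb
    rw [Walk.support_reverse, List.mem_reverse] at hw'
    have hw'sub : w' ∈ (Walk.cons h₀ q).support :=
      hrsub w' (List.mem_cons_of_mem _ hw')
    have hwx : w' ≠ x := fun h => hxq3 (h ▸ hw')
    have hwy : w' ≠ y := fun h => hynq3 (h ▸ hw')
    refine ⟨hwx, hwy, ?_, ?_⟩
    · intro hA
      have hmem : s(x, w') ∈ (Walk.cons h₀ q).edges :=
        hind x (Walk.start_mem_support _) w' hw'sub hA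
      rcases (hiff _).1 hmem with h | h | h
      · rcases Sym2.eq_iff.1 h with ⟨_, h'⟩ | ⟨h', _⟩
        · exact hwa h'
        · exact hadjxa.ne h'
      · rcases Sym2.eq_iff.1 h with ⟨_, h'⟩ | ⟨h', _⟩
        · exact hwy h'
        · exact hxny h'
      · rw [Walk.edges_cons, List.mem_cons] at h
        rcases h with h | h
        · rcases Sym2.eq_iff.1 h with ⟨h', _⟩ | ⟨h', hw2⟩
          · exact hxny h'
          · exact hbx h'.symm
        · exact hxq3 (Walk.fst_mem_support_of_mem_edges q3 h)
    · intro hA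
      have hymem : y ∈ (Walk.cons h₀ q).support :=
        hrsub y (List.mem_cons_self)
      have hmem : s(y, w') ∈ (Walk.cons h₀ q).edges :=
        hind y hymem w' hw'sub hA
      rcases (hiff _).1 hmem with h | h | h
      · rcases Sym2.eq_iff.1 h with ⟨h', _⟩ | ⟨h', _⟩
        · exact hxny h'.symm
        · exact hay h'.symm
      · rcases Sym2.eq_iff.1 h with ⟨h', _⟩ | ⟨_, h'⟩
        · exact hxny h'.symm
        · exact hwx h'
      · rw [Walk.edges_cons, List.mem_cons] at h
        rcases h with h | h
        · rcases Sym2.eq_iff.1 h with ⟨_, h'⟩ | ⟨h', _⟩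
          · exact hwb h'
          · exact hadjyb.ne h'
        · exact hynq3 (Walk.fst_mem_support_of_mem_edges q3 h)

end AuxAvoidable

theorem avoidableEdge_iff_protected_in_delete_common {V : Type*} [Fintype V]
    (G : SimpleGraph V) (x y : V) (hxy : G.Adj x y) :
    AvoidableEdge G x y ↔
      ProtectedEdge (G.induce (G.neighborSet x ∩ G.neighborSet y)ᶜ)
        ⟨x, fun h => (G.irrefl h.1)⟩ ⟨y, fun h => (G.irrefl h.2)⟩ := by
  classical
  have hmemS : ∀ w : V, w ∈ (G.neighborSet x ∩ G.neighborSet y)ᶜ ↔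
      ¬(G.Adj x w ∧ G.Adj y w) := by
    intro w
    simp [Set.mem_compl_iff, Set.mem_inter_iff, mem_neighborSet]
  constructor
  · -- Avoidable → Protected
    intro H a b hxa hyb
    obtain ⟨A, hAS⟩ := a
    obtain ⟨B, hBS⟩ := b
    have hxA : G.Adj x A := hxa
    have hyB : G.Adj y B := hyb
    by_cases hab : (G.induce (G.neighborSet x ∩ G.neighborSet y)ᶜ).Adj ⟨A, hAS⟩ ⟨B, hBS⟩
    · refine ⟨Walk.cons hab Walk.nil, ?_⟩
      intro v hv hva hvb
      simp only [Walk.support_cons, Walk.support_nil, List.mem_cons,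
        List.mem_singleton, List.not_mem_nil, or_false] at hv
      rcases hv with h | h
      · exact absurd h hva
      · exact absurd h hvb
    · by_cases habeq : A = B
      · subst habeq
        refine ⟨Walk.nil, ?_⟩
        intro v hv hva _
        simp only [Walk.support_nil, List.mem_singleton] at hv
        exact absurd hv hva
      · have hAy : A ≠ y := fun h => hab (show G.Adj A B from h ▸ hyB)
        have hBx : B ≠ x := fun h => hab (show G.Adj A B from by rw [h]; exact hxA.symm)
        have hAny : ¬ G.Adj A y := fun h => ((hmemS A).1 hAS) ⟨hxA, h.symm⟩
        have hxBn : ¬ G.Adj x B := fun h => ((hmemS B).1 hBS) ⟨h, hyB⟩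
        have hP4 : IsMiddleP4 G x y A B :=
          ⟨hxA.symm, hyB, hAny, hxBn, fun h => hab h, hAy, hBx, habeq⟩
        obtain ⟨v, c, ⟨hcyc, hindc⟩, hma, hmx, hmy, hmb⟩ := H A B hP4
        have hcyc' : (c.rotate x hmx).IsCycle := hcyc.rotate hmx
        have hedge' : ∀ e, e ∈ (c.rotate x hmx).edges ↔ e ∈ c.edges :=
          fun e => (c.rotate_edges x hmx).mem_iff
        have hsup' : ∀ z ∈ (c.rotate x hmx).support, z ∈ c.support := by
          intro z hz
          rw [Walk.support_eq_cons] at hz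
          rcases List.mem_cons.1 hz with h | h
          · exact h ▸ hmx
          · have h2 := (c.support_rotate x hmx).mem_iff.1 h
            rw [Walk.support_eq_cons c]
            exact List.mem_cons_of_mem _ h2
        have hind' : ∀ u ∈ (c.rotate x hmx).support, ∀ w ∈ (c.rotate x hmx).support,
            G.Adj u w → s(u, w) ∈ (c.rotate x hmx).edges :=
          fun u hu w hw hadj => (hedge' _).2 (hindc u (hsup' u hu) w (hsup' w hw) hadj)
        have hxaE : s(x, A) ∈ (c.rotate x hmx).edges := (hedge' _).2 (hindc x hmx A hma hxA)
        have hxyE : s(x, y) ∈ (c.rotate x hmx).edges := (hedge' _).2 (hindc x hmx y hmy hxy)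
        have hybE : s(y, B) ∈ (c.rotate x hmx).edges := (hedge' _).2 (hindc y hmy B hmb hyB)
        obtain ⟨p, hp⟩ := cycle_decomp (c.rotate x hmx) hcyc' hind' hxy hxA hyB hxaE hxyE hybE hAy hBx
        have hpS : ∀ w ∈ p.support, w ∈ (G.neighborSet x ∩ G.neighborSet y)ᶜ := by
          intro w hw
          by_cases hwa : w = A
          · exact hwa ▸ hAS
          by_cases hwb : w = B
          · exact hwb ▸ hBS
          obtain ⟨_, _, hnx, _⟩ := hp w hw hwa hwb
          exact (hmemS w).2 (fun h => hnx h.1)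
        obtain ⟨q, hq⟩ := lift_walk_s16 p hpS hAS hBS
        refine ⟨q, ?_⟩
        intro v hv hva hvb
        obtain ⟨w, hwS⟩ := v
        have hwp : w ∈ p.support := hq _ hv
        have hwa : w ≠ A := fun h => hva (Subtype.ext h)
        have hwb : w ≠ B := fun h => hvb (Subtype.ext h)
        obtain ⟨hnx, hny, hnax, hnay⟩ := hp w hwp hwa hwb
        intro hmem
        simp only [Set.mem_union, Set.mem_insert_iff, mem_neighborSet] at hmem
        rcases hmem with (hmem | hmem) | (hmem | hmem)
        · exact hnx (congrArg Subtype.val hmem)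
        · exact hnax hmem
        · exact hny (congrArg Subtype.val hmem)
        · exact hnay hmem
  · -- Protected → Avoidable
    intro H A B hP4
    obtain ⟨h1, h2, h3, h4, h5, h6, h7, h8⟩ := hP4
    have hAS : A ∈ (G.neighborSet x ∩ G.neighborSet y)ᶜ :=
      (hmemS A).2 (fun h => h3 h.2.symm)
    have hBS : B ∈ (G.neighborSet x ∩ G.neighborSet y)ᶜ :=
      (hmemS B).2 (fun h => h4 h.1)
    obtain ⟨p', hp'⟩ := H ⟨A, hAS⟩ ⟨B, hBS⟩ (show G.Adj x A from h1.symm) (show G.Adj y B from h2)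
    let p : G.Walk A B :=
      p'.map (SimpleGraph.Embedding.induce (G.neighborSet x ∩ G.neighborSet y)ᶜ).toHom
    have hpT : ∀ w ∈ p.support, w = A ∨ w = B ∨
        (w ≠ x ∧ w ≠ y ∧ ¬G.Adj x w ∧ ¬G.Adj y w) := by
      intro w hw
      rw [show p.support = _ from Walk.support_map _ _, List.mem_map] at hw
      obtain ⟨v, hv, rfl⟩ := hw
      by_cases hva : v = ⟨A, hAS⟩
      · left; rw [hva]; rfl
      by_cases hvb : v = ⟨B, hBS⟩
      · right; left; rw [hvb]; rfl
      right; right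
      have hcond := hp' v hv hva hvb
      simp only [Set.mem_union, Set.mem_insert_iff, mem_neighborSet, not_or] at hcond
      obtain ⟨⟨hx1, hx2⟩, ⟨hy1, hy2⟩⟩ := hcond
      exact ⟨fun h => hx1 (Subtype.ext h), fun h => hy1 (Subtype.ext h),
        fun h => hx2 h, fun h => hy2 h⟩
    obtain ⟨q, hqpath, hqsub, hqind⟩ := exists_inducedPath p
    have hqT : ∀ w ∈ q.support, w = A ∨ w = B ∨
        (w ≠ x ∧ w ≠ y ∧ ¬G.Adj x w ∧ ¬G.Adj y w) :=
      fun w hw => hpT w (hqsub w hw)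
    have hxq : x ∉ q.support := by
      intro h
      rcases hqT x h with h' | h' | h'
      · exact h1.ne h'.symm
      · exact h7 h'.symm
      · exact h'.1 rfl
    have hyq : y ∉ q.support := by
      intro h
      rcases hqT y h with h' | h' | h'
      · exact h6 h'.symm
      · exact h2.ne h'
      · exact h'.2.1 rfl
    let r : G.Walk B x := Walk.cons h2.symm (Walk.cons hxy.symm Walk.nil)
    let cyc : G.Walk x x := Walk.cons h1.symm (q.append r)
    have hsupc : cyc.support = x :: (q.support ++ [y, x]) := by
      simp [cyc, r, Walk.support_append]
    have hedgec : cyc.edges = s(x, A) :: (q.edges ++ [s(B, y), s(y, x)]) := by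
      simp [cyc, r, Walk.edges_append]
    have edge_xA : s(x, A) ∈ cyc.edges := by rw [hedgec]; exact List.mem_cons_self
    have edge_By : s(B, y) ∈ cyc.edges := by rw [hedgec]; simp
    have edge_yx : s(y, x) ∈ cyc.edges := by rw [hedgec]; simp
    have edge_q : ∀ e ∈ q.edges, e ∈ cyc.edges := by
      intro e he; rw [hedgec]; simp [he]
    have hmemc : ∀ z, z ∈ cyc.support ↔ z = x ∨ z ∈ q.support ∨ z = y := by
      intro z
      rw [hsupc]
      simp only [List.mem_cons, List.mem_append, List.mem_singleton]
      tauto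
    refine ⟨x, cyc, ⟨?_, ?_⟩, ?_, ?_, ?_, ?_⟩
    · -- IsCycle
      rw [Walk.isCycle_def]
      refine ⟨?_, ?_, ?_⟩
      · rw [Walk.isTrail_def, hedgec]
        have hxAe : s(x, A) ∉ q.edges := fun h => hxq (Walk.fst_mem_support_of_mem_edges q h)
        have hBye : s(B, y) ∉ q.edges := fun h => hyq (Walk.snd_mem_support_of_mem_edges q h)
        have hyxe : s(y, x) ∉ q.edges := fun h => hyq (Walk.fst_mem_support_of_mem_edges q h)
        have d1 : s(x, A) ≠ s(B, y) := by
          intro h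
          rcases Sym2.eq_iff.1 h with ⟨h', _⟩ | ⟨h', _⟩
          · exact h7 h'.symm
          · exact hxy.ne h'
        have d2 : s(x, A) ≠ s(y, x) := by
          intro h
          rcases Sym2.eq_iff.1 h with ⟨h', _⟩ | ⟨_, h'⟩
          · exact hxy.ne h'
          · exact h6 h'
        have d3 : s(B, y) ≠ s(y, x) := by
          intro h
          rcases Sym2.eq_iff.1 h with ⟨_, h'⟩ | ⟨h', _⟩
          · exact hxy.ne h'.symm
          · exact h7 h'
        refine List.nodup_cons.2 ⟨?_, ?_⟩
        · intro h
          rcases List.mem_append.1 h with h | h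
          · exact hxAe h
          · rcases List.mem_cons.1 h with h | h
            · exact d1 h
            · rcases List.mem_cons.1 h with h | h
              · exact d2 h
              · exact absurd h (List.not_mem_nil)
        · refine List.Nodup.append hqpath.isTrail.edges_nodup ?_ ?_
          · refine List.nodup_cons.2 ⟨?_, List.nodup_singleton _⟩
            intro h
            rcases List.mem_cons.1 h with h | h
            · exact d3 h
            · exact absurd h (List.not_mem_nil)
          · intro e he h
            rcases List.mem_cons.1 h with h | h
            · exact hBye (h ▸ he)
            · rcases List.mem_cons.1 h with h | h
              · exact hyxe (h ▸ he)
              · exact absurd h (List.not_mem_nil)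
      · simp [cyc]
      · rw [hsupc]
        simp only [List.tail_cons]
        refine List.Nodup.append hqpath.support_nodup ?_ ?_
        · refine List.nodup_cons.2 ⟨?_, List.nodup_singleton _⟩
          intro h
          rcases List.mem_cons.1 h with h | h
          · exact hxy.ne h.symm
          · exact absurd h (List.not_mem_nil)
        · intro z hz hz2
          rcases List.mem_cons.1 hz2 with h | h
          · exact hyq (h ▸ hz)
          · rcases List.mem_cons.1 h with h | h
            · exact hxq (h ▸ hz)
            · exact absurd h (List.not_mem_nil)
    · -- induced
      intro u hu w hw hadj
      rw [hmemc] at hu hw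
      have hx_case : ∀ w', w' ∈ q.support ∨ w' = y → G.Adj x w' → s(x, w') ∈ cyc.edges := by
        intro w' hw' hadj'
        rcases hw' with hw' | rfl
        · rcases hqT w' hw' with rfl | rfl | hcl
          · exact edge_xA
          · exact absurd hadj' h4
          · exact absurd hadj' hcl.2.2.1
        · exact Sym2.eq_swap ▸ edge_yx
      have hy_case : ∀ w', w' ∈ q.support ∨ w' = x → G.Adj y w' → s(y, w') ∈ cyc.edges := by
        intro w' hw' hadj'
        rcases hw' with hw' | rfl
        · rcases hqT w' hw' with rfl | rfl | hcl
          · exact absurd hadj'.symm h3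
          · exact Sym2.eq_swap ▸ edge_By
          · exact absurd hadj' hcl.2.2.2
        · exact edge_yx
      rcases hu with rfl | hu | rfl
      · rcases hw with rfl | hw | rfl
        · exact absurd hadj (G.irrefl)
        · exact hx_case w (Or.inl hw) hadj
        · exact hx_case w (Or.inr rfl) hadj
      · rcases hw with rfl | hw | rfl
        · exact Sym2.eq_swap ▸ hx_case u (Or.inl hu) hadj.symm
        · exact edge_q _ (hqind u w hu hw hadj)
        · exact Sym2.eq_swap ▸ hy_case u (Or.inl hu) hadj.symm
      · rcases hw with rfl | hw | rfl
        · exact hy_case w (Or.inr rfl) hadj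
        · exact hy_case w (Or.inl hw) hadj
        · exact absurd hadj (G.irrefl)
    · exact (hmemc A).2 (Or.inr (Or.inl q.start_mem_support))
    · exact (hmemc x).2 (Or.inl rfl)
    · exact (hmemc y).2 (Or.inr (Or.inr rfl))
    · exact (hmemc B).2 (Or.inr (Or.inl q.end_mem_support))
end

section
/- Let P be an induced path on k ≥ 3 vertices in a finite simple graph G with endpoints x and y, and let I[P] = N[in(P)] \ {x,y} where in(P) is the set of internal vertices of P. Then P is an avoidable path in G if and only if xy is an avoidable edge in the graph G + xy − I[P]. -/
open SimpleGraph

/-- A walk is an induced path if it is a path and every adjacency between its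
vertices is an edge of the path. -/
def IsInducedPath {V : Type*} (G : SimpleGraph V) {x y : V} (p : G.Walk x y) : Prop :=
  p.IsPath ∧ ∀ a ∈ p.support, ∀ b ∈ p.support, G.Adj a b → s(a, b) ∈ p.edges

/-- An induced path `P` (with endpoints `x, y`) is avoidable if every induced
path on two more vertices containing `P` as an internal path is contained in
an induced cycle. -/
def AvoidablePath {V : Type*} (G : SimpleGraph V) {x y : V} (p : G.Walk x y) : Prop :=
  ∀ (a b : V) (hax : G.Adj a x) (hyb : G.Adj y b),
    IsInducedPath G ((SimpleGraph.Walk.cons hax p).concat hyb) →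
    ∃ (v : V) (c : G.Walk v v), IsInducedCycle G c ∧
      ∀ w ∈ ((SimpleGraph.Walk.cons hax p).concat hyb).support, w ∈ c.support

/-- `I[P] = N[in(P)] \ {x, y}`: the internal vertices of `P` together with all
their neighbors other than the endpoints `x, y`. -/
def pathClosure {V : Type*} (G : SimpleGraph V) {x y : V} (p : G.Walk x y) : Set V :=
  {v | v ≠ x ∧ v ≠ y ∧ ∃ w ∈ p.support, w ≠ x ∧ w ≠ y ∧ (v = w ∨ G.Adj w v)}



namespace AvoidAux

variable {V : Type*} {G : SimpleGraph V}

lemma eq_cons_of_start_edge {u v w : V} {D : G.Walk u v} (hD : D.IsPath)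
    (he : s(u, w) ∈ D.edges) : ∃ (h : G.Adj u w) (D' : G.Walk w v), D = Walk.cons h D' := by
  cases D with
  | nil => simp at he
  | cons h q =>
    rw [Walk.edges_cons, List.mem_cons] at he
    rcases he with he | he
    · rw [Sym2.eq_iff] at he
      rcases he with ⟨-, rfl⟩ | ⟨h1, rfl⟩
      · exact ⟨h, q, rfl⟩
      · exact absurd h1 h.ne
    · rw [Walk.cons_isPath_iff] at hD
      exact absurd (q.fst_mem_support_of_mem_edges he) hD.2

/-- the neighbor of the start of a path along the path is unique -/
lemma start_edge_unique {u v : V} {W : G.Walk u v} (hW : W.IsPath) {c d : V}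
    (hc : s(u, c) ∈ W.edges) (hd : s(u, d) ∈ W.edges) : c = d := by
  obtain ⟨h1, D1, rfl⟩ := eq_cons_of_start_edge hW hc
  rw [Walk.edges_cons, List.mem_cons] at hd
  rcases hd with hd | hd
  · rw [Sym2.eq_iff] at hd
    rcases hd with ⟨-, rfl⟩ | ⟨h2, rfl⟩
    · rfl
    · exact absurd h2 h1.ne
  · rw [Walk.cons_isPath_iff] at hW
    exact absurd (D1.fst_mem_support_of_mem_edges hd) hW.2

lemma exists_suffix_of_edges_subset :
    ∀ {u w v : V} (q : G.Walk u w) (D : G.Walk u v), q.IsPath → D.IsPath →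
      (∀ e ∈ q.edges, e ∈ D.edges) → ∃ r : G.Walk w v, D = q.append r
  | _, _, _, Walk.nil, D, _, _, _ => ⟨D, (Walk.nil_append D).symm⟩
  | _, _, _, @Walk.cons _ _ u b w h q, D, hq, hD, hsub => by
    have h0 : s(u, b) ∈ D.edges := hsub _ (by rw [Walk.edges_cons]; exact List.mem_cons_self)
    obtain ⟨h', D', rfl⟩ := eq_cons_of_start_edge hD h0
    rw [Walk.cons_isPath_iff] at hq hD
    have hsub2 : ∀ e ∈ q.edges, e ∈ D'.edges := by
      intro e he
      have h2 := hsub e (by rw [Walk.edges_cons]; exact List.mem_cons_of_mem _ he)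
      rw [Walk.edges_cons, List.mem_cons] at h2
      rcases h2 with rfl | h2
      · exact absurd (q.fst_mem_support_of_mem_edges he) hq.2
      · exact h2
    obtain ⟨r, hr⟩ := exists_suffix_of_edges_subset q D' hq.1 hD.1 hsub2
    exact ⟨r, by rw [Walk.cons_append, hr]⟩

lemma isCycle_reverse {x : V} {C : G.Walk x x} (hC : C.IsCycle) : C.reverse.IsCycle := by
  have h3 := hC.three_le_length
  rw [Walk.isCycle_def] at hC ⊢
  refine ⟨?_, ?_, ?_⟩
  · rw [Walk.isTrail_def, Walk.edges_reverse, List.nodup_reverse]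
    exact hC.1.edges_nodup
  · intro h
    have hl := congrArg Walk.length h
    rw [Walk.length_reverse, Walk.length_nil] at hl
    omega
  · have hs := C.support_eq_cons
    have htne : C.support.tail ≠ [] := by
      intro h
      have hl := C.length_support
      rw [hs, h, List.length_cons, List.length_nil] at hl
      omega
    have htrne : C.support.tail.reverse ≠ [] := by simpa using htne
    obtain ⟨b, m, hm⟩ := List.exists_cons_of_ne_nil htrne
    have ht : C.support.tail.Nodup := hC.2.2
    have h1 : C.support.tail.reverse.Nodup := by rw [List.nodup_reverse]; exact ht
    have h4 := C.reverse.support_eq_cons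
    rw [Walk.support_reverse, hs, List.reverse_cons, hm, List.cons_append] at h4
    have hb : b = x := by
      have := congrArg List.head? h4
      simpa using this
    subst hb
    rw [hm, List.nodup_cons] at h1
    rw [Walk.support_reverse, hs, List.reverse_cons, hm, List.cons_append, List.tail_cons,
      List.nodup_append']
    simp only [List.nodup_cons, List.not_mem_nil, not_false_iff, List.nodup_nil, and_true,
      List.disjoint_singleton]
    exact ⟨h1.2, trivial, h1.1⟩

end AvoidAux

namespace AvoidAux
variable {V : Type*} {G : SimpleGraph V}

lemma support_tail_reverse_closed {x : V} {C : G.Walk x x} (hne : C ≠ Walk.nil) :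
    ∃ m, C.support.tail.reverse = x :: m := by
  have htne : C.support.tail ≠ [] := by
    intro h
    cases C with
    | nil => exact hne rfl
    | cons hadj q => rw [Walk.support_cons, List.tail_cons] at h; exact q.support_ne_nil h
  have htrne : C.support.tail.reverse ≠ [] := by simpa using htne
  obtain ⟨b, m, hm⟩ := List.exists_cons_of_ne_nil htrne
  have h4 := C.support_eq_cons
  have h5 := C.reverse.support_eq_cons
  rw [Walk.support_reverse, h4, List.reverse_cons, hm, List.cons_append] at h5
  have hb : b = x := by simpa using congrArg List.head? h5
  exact ⟨m, by rw [hm, hb]⟩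

lemma mem_tail_of_mem_support_closed {x : V} {C : G.Walk x x} (hne : C ≠ Walk.nil)
    {u : V} (hu : u ∈ C.support) : u ∈ C.support.tail := by
  rw [C.support_eq_cons, List.mem_cons] at hu
  rcases hu with rfl | hu
  · obtain ⟨m, hm⟩ := support_tail_reverse_closed hne
    rw [← List.mem_reverse, hm]
    exact List.mem_cons_self
  · exact hu

lemma mem_support_rotate_iff [DecidableEq V] {v x u : V} {C : G.Walk v v} (hC : C.IsCycle)
    (hx : x ∈ C.support) : u ∈ (C.rotate x hx).support ↔ u ∈ C.support := by
  have h1 := (C.support_rotate x hx).mem_iff (a := u)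
  constructor
  · intro h
    exact List.mem_of_mem_tail (h1.mp (mem_tail_of_mem_support_closed (hC.rotate hx).ne_nil h))
  · intro h
    exact List.mem_of_mem_tail (h1.mpr (mem_tail_of_mem_support_closed hC.ne_nil h))

lemma mem_edges_rotate_iff [DecidableEq V] {v x : V} {C : G.Walk v v}
    (hx : x ∈ C.support) {e : Sym2 V} : e ∈ (C.rotate x hx).edges ↔ e ∈ C.edges :=
  (C.rotate_edges x hx).mem_iff

/-- Given a cycle through `x` and an edge `s(x,w)` of it, reorient the cycle so that
it starts with that edge. -/
lemma cycle_start_edge {x w : V} {C : G.Walk x x} (hC : C.IsCycle) (he : s(x, w) ∈ C.edges) :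
    ∃ C' : G.Walk x x, C'.IsCycle ∧ (∀ v, v ∈ C'.support ↔ v ∈ C.support) ∧
      (∀ e, e ∈ C'.edges ↔ e ∈ C.edges) ∧
      ∃ (h : G.Adj x w) (D : G.Walk w x), C' = Walk.cons h D := by
  cases C with
  | nil => simp at he
  | cons h D =>
    rw [Walk.edges_cons, List.mem_cons] at he
    rcases he with he | he
    · rw [Sym2.eq_iff] at he
      rcases he with ⟨-, rfl⟩ | ⟨h1, rfl⟩
      · exact ⟨Walk.cons h D, hC, fun _ => Iff.rfl, fun _ => Iff.rfl, h, D, rfl⟩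
      · exact absurd h1 h.ne
    · have hD : D.IsPath := ((Walk.cons_isCycle_iff D h).mp hC).1
      have hDr : D.reverse.IsPath := hD.reverse
      have her : s(x, w) ∈ D.reverse.edges := by
        rw [Walk.edges_reverse, List.mem_reverse]; exact he
      obtain ⟨h', D'', hD''⟩ := eq_cons_of_start_edge hDr her
      refine ⟨(Walk.cons h D).reverse, isCycle_reverse hC, ?_, ?_, h',
        D''.append (Walk.cons h.symm Walk.nil), ?_⟩
      · intro v; rw [Walk.support_reverse, List.mem_reverse]
      · intro e; rw [Walk.edges_reverse, List.mem_reverse]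
      · rw [Walk.reverse_cons, hD'', Walk.cons_append]

/-- A cycle containing all edges of a path with the same start can be reoriented to
have the path as a prefix. -/
lemma cycle_decompose {x y : V} {C : G.Walk x x} (hC : C.IsCycle)
    {p : G.Walk x y} (hp : p.IsPath) (hpn : 0 < p.length)
    (hsub : ∀ e ∈ p.edges, e ∈ C.edges) :
    ∃ (C' : G.Walk x x) (r : G.Walk y x), C'.IsCycle ∧
      (∀ v, v ∈ C'.support ↔ v ∈ C.support) ∧ (∀ e, e ∈ C'.edges ↔ e ∈ C.edges) ∧
      C' = p.append r := by
  cases p with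
  | nil => simp at hpn
  | @cons _ b _ hadj pt =>
    obtain ⟨C', hC', hsupp, hedge, h', D, rfl⟩ := cycle_start_edge hC
      (hsub _ (by rw [Walk.edges_cons]; exact List.mem_cons_self))
    have hD : D.IsPath := ((Walk.cons_isCycle_iff D h').mp hC').1
    rw [Walk.cons_isPath_iff] at hp
    have hsub2 : ∀ e ∈ pt.edges, e ∈ D.edges := by
      intro e he
      have h2 := (hedge e).mpr (hsub e (by rw [Walk.edges_cons]; exact List.mem_cons_of_mem _ he))
      rw [Walk.edges_cons, List.mem_cons] at h2
      rcases h2 with rfl | h2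
      · exact absurd (pt.fst_mem_support_of_mem_edges he) hp.2
      · exact h2
    obtain ⟨r, hr⟩ := exists_suffix_of_edges_subset pt D hp.1 hD hsub2
    exact ⟨Walk.cons h' D, r, hC', hsupp, hedge, by rw [Walk.cons_append, hr]⟩

end AvoidAux

namespace AvoidAux
variable {V W : Type*} {G H : SimpleGraph V} {s : Set V} {G' : SimpleGraph W}

/-- Lift a walk of `G` whose vertices all lie in `s` to the induced subgraph of a
supergraph `H` on `s`. -/
def liftWalk (hGH : ∀ ⦃a b : V⦄, G.Adj a b → H.Adj a b) :
    ∀ {u v : V} (r : G.Walk u v) (hu : u ∈ s) (hv : v ∈ s),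
      (∀ w ∈ r.support, w ∈ s) → (H.induce s).Walk ⟨u, hu⟩ ⟨v, hv⟩
  | _, _, Walk.nil, _, _, _ => Walk.nil
  | _, _, @Walk.cons _ _ u b v h q, hu, hv, hr =>
      have hb : b ∈ s := hr _ (List.mem_cons_of_mem _ q.start_mem_support)
      Walk.cons
        (show (H.induce s).Adj ⟨u, hu⟩ ⟨b, hb⟩ by
          simp only [comap_adj, Function.Embedding.coe_subtype]
          exact hGH h)
        (liftWalk hGH q hb hv (fun w hw => hr w (List.mem_cons_of_mem _ hw)))

lemma liftWalk_support (hGH : ∀ ⦃a b : V⦄, G.Adj a b → H.Adj a b) :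
    ∀ {u v : V} (r : G.Walk u v) (hu : u ∈ s) (hv : v ∈ s)
      (hr : ∀ w ∈ r.support, w ∈ s),
      (liftWalk hGH r hu hv hr).support.map Subtype.val = r.support
  | _, _, Walk.nil, _, _, _ => rfl
  | _, _, @Walk.cons _ _ u b v h q, hu, hv, hr => by
      simp only [liftWalk, Walk.support_cons, List.map_cons]
      rw [liftWalk_support hGH q _ _ _]

lemma liftWalk_edges (hGH : ∀ ⦃a b : V⦄, G.Adj a b → H.Adj a b) :
    ∀ {u v : V} (r : G.Walk u v) (hu : u ∈ s) (hv : v ∈ s)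
      (hr : ∀ w ∈ r.support, w ∈ s),
      (liftWalk hGH r hu hv hr).edges.map (Sym2.map Subtype.val) = r.edges
  | _, _, Walk.nil, _, _, _ => rfl
  | _, _, @Walk.cons _ _ u b v h q, hu, hv, hr => by
      simp only [liftWalk, Walk.edges_cons, List.map_cons, Sym2.map_pair_eq]
      rw [liftWalk_edges hGH q _ _ _]

/-- Project a walk of `G'` to a graph `G` on another vertex type along `f`,
assuming all its edges map to edges of `G`. -/
def projWalk (f : W → V) (G : SimpleGraph V) :
    ∀ {u v : W} (r : G'.Walk u v),
      (∀ e ∈ r.edges, Sym2.map f e ∈ G.edgeSet) → G.Walk (f u) (f v)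
  | _, _, Walk.nil, _ => Walk.nil
  | _, _, @Walk.cons _ _ u b v h q, hr =>
      Walk.cons
        (show G.Adj (f u) (f b) by
          have h2 : Sym2.map f s(u, b) ∈ G.edgeSet :=
            hr s(u, b) (by rw [Walk.edges_cons]; exact List.mem_cons_self)
          rwa [Sym2.map_pair_eq, SimpleGraph.mem_edgeSet] at h2)
        (projWalk f G q (fun e he => hr e (List.mem_cons_of_mem _ he)))

lemma projWalk_support (f : W → V) (G : SimpleGraph V) :
    ∀ {u v : W} (r : G'.Walk u v) (hr : ∀ e ∈ r.edges, Sym2.map f e ∈ G.edgeSet),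
      (projWalk f G r hr).support = r.support.map f
  | _, _, Walk.nil, _ => rfl
  | _, _, @Walk.cons _ _ u b v h q, hr => by
      simp only [projWalk, Walk.support_cons, List.map_cons]
      rw [projWalk_support f G q _]

lemma projWalk_edges (f : W → V) (G : SimpleGraph V) :
    ∀ {u v : W} (r : G'.Walk u v) (hr : ∀ e ∈ r.edges, Sym2.map f e ∈ G.edgeSet),
      (projWalk f G r hr).edges = r.edges.map (Sym2.map f)
  | _, _, Walk.nil, _ => rfl
  | _, _, @Walk.cons _ _ u b v h q, hr => by
      simp only [projWalk, Walk.edges_cons, List.map_cons, Sym2.map_pair_eq]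
      rw [projWalk_edges f G q _]

end AvoidAux

open AvoidAux in
/-- An induced path `P` on at least 3 vertices with endpoints `x, y` is
avoidable in `G` iff `xy` is an avoidable edge in `G + xy − I[P]`. -/
theorem avoidablePath_iff_avoidableEdge {V : Type*} [Fintype V]
    (G : SimpleGraph V) (x y : V) (p : G.Walk x y)
    (hp : IsInducedPath G p) (hk : 2 ≤ p.length) :
    AvoidablePath G p ↔
      AvoidableEdge
        ((G ⊔ fromEdgeSet {s(x, y)}).induce (pathClosure G p)ᶜ)
        ⟨x, fun h => h.1 rfl⟩ ⟨y, fun h => h.2.1 rfl⟩ := by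
  classical
  set S : Set V := (pathClosure G p)ᶜ with hSdef
  set G2 : SimpleGraph S := (G ⊔ fromEdgeSet {s(x, y)}).induce S with hG2def
  set x' : S := ⟨x, fun h => h.1 rfl⟩ with hx'def
  set y' : S := ⟨y, fun h => h.2.1 rfl⟩ with hy'def
  -- basic facts
  have hxy : x ≠ y := by
    intro h
    subst h
    have hnil := (SimpleGraph.Walk.isPath_iff_eq_nil (p := p)).mp hp.1
    rw [hnil] at hk
    simp at hk
  have hnadj : ¬ G.Adj x y := by
    intro h
    have he : s(x, y) ∈ p.edges := hp.2 x p.start_mem_support y p.end_mem_support h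
    obtain ⟨h1, q, hq⟩ := eq_cons_of_start_edge hp.1 he
    have hqp : q.IsPath := by
      have := hp.1
      rw [hq, SimpleGraph.Walk.cons_isPath_iff] at this
      exact this.1
    have hqnil := (SimpleGraph.Walk.isPath_iff_eq_nil (p := q)).mp hqp
    rw [hq, hqnil] at hk
    simp at hk
  have hG'adj2 : ∀ u' v' : S, G2.Adj u' v' ↔
      (G.Adj ↑u' ↑v' ∨ (s((u' : V), (v' : V)) = s(x, y) ∧ (u' : V) ≠ (v' : V))) := by
    intro u' v'
    rw [hG2def]
    simp only [SimpleGraph.comap_adj, Function.Embedding.coe_subtype, SimpleGraph.sup_adj,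
      SimpleGraph.fromEdgeSet_adj, Set.mem_singleton_iff]
  have hxy' : G2.Adj x' y' :=
    (hG'adj2 x' y').mpr (Or.inr ⟨rfl, hxy⟩)
  have hGle : ∀ ⦃u v : V⦄, G.Adj u v → (G ⊔ fromEdgeSet {s(x, y)}).Adj u v := by
    intro u v h
    rw [SimpleGraph.sup_adj]
    exact Or.inl h
  have hnotint : ∀ u ∈ p.support, u ∉ pathClosure G p → u = x ∨ u = y := by
    intro u hu hnc
    by_contra h
    push_neg at h
    exact hnc ⟨h.1, h.2, u, hu, h.1, h.2, Or.inl rfl⟩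
  constructor
  · -- AvoidablePath → AvoidableEdge
    intro hAP a' b' hM
    obtain ⟨a, haS⟩ := a'
    obtain ⟨b, hbS⟩ := b'
    obtain ⟨hax', hyb', hnay', hnxb', hnab', hay', hbx', hab'⟩ := hM
    have hay : a ≠ y := fun h => hay' (Subtype.ext h)
    have hbx : b ≠ x := fun h => hbx' (Subtype.ext h)
    have hab : a ≠ b := fun h => hab' (Subtype.ext h)
    have hax : G.Adj a x := by
      rcases (hG'adj2 _ _).mp hax' with h | ⟨he, hne⟩
      · exact h
      · exfalso
        rw [Sym2.eq_iff] at he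
        rcases he with ⟨-, hxy2⟩ | ⟨hay2, -⟩
        · exact hxy hxy2
        · exact hay hay2
    have hyb : G.Adj y b := by
      rcases (hG'adj2 _ _).mp hyb' with h | ⟨he, hne⟩
      · exact h
      · exfalso
        rw [Sym2.eq_iff] at he
        rcases he with ⟨hyx, -⟩ | ⟨-, hbx2⟩
        · exact hxy hyx.symm
        · exact hbx hbx2
    have hnay : ¬ G.Adj a y := fun h => hnay' ((hG'adj2 _ _).mpr (Or.inl h))
    have hnxb : ¬ G.Adj x b := fun h => hnxb' ((hG'adj2 _ _).mpr (Or.inl h))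
    have hnab : ¬ G.Adj a b := fun h => hnab' ((hG'adj2 _ _).mpr (Or.inl h))
    have hanp : a ∉ p.support := fun h => haS ⟨hax.ne, hay, a, h, hax.ne, hay, Or.inl rfl⟩
    have hbnp : b ∉ p.support := fun h => hbS ⟨hbx, hyb.ne', b, h, hbx, hyb.ne', Or.inl rfl⟩
    -- the extended path W
    set W := (SimpleGraph.Walk.cons hax p).concat hyb with hWdef
    have hWc : W = SimpleGraph.Walk.cons hax (p.concat hyb) := SimpleGraph.Walk.concat_cons _ _ _
    have hWs : W.support = a :: (p.support ++ [b]) := by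
      rw [hWc, SimpleGraph.Walk.support_cons, SimpleGraph.Walk.support_concat]
    have hWe : W.edges = s(a, x) :: (p.edges ++ [s(y, b)]) := by
      rw [hWc, SimpleGraph.Walk.edges_cons, SimpleGraph.Walk.edges_concat, List.concat_eq_append]
    have hWpath : W.IsPath := by
      rw [hWc, SimpleGraph.Walk.cons_isPath_iff]
      constructor
      · have h1 : (p.concat hyb).reverse.IsPath := by
          rw [SimpleGraph.Walk.reverse_concat, SimpleGraph.Walk.cons_isPath_iff]
          refine ⟨hp.1.reverse, ?_⟩
          rw [SimpleGraph.Walk.support_reverse, List.mem_reverse]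
          exact hbnp
        have h2 := h1.reverse
        rwa [SimpleGraph.Walk.reverse_reverse] at h2
      · rw [SimpleGraph.Walk.support_concat, List.mem_append,
          List.mem_singleton]
        rintro (h | h)
        · exact hanp h
        · exact hab h
    have hWind : IsInducedPath G W := by
      refine ⟨hWpath, ?_⟩
      intro u hu v hv hadj
      rw [hWs, List.mem_cons, List.mem_append, List.mem_singleton] at hu hv
      have hcase : ∀ u v : V, u ∈ p.support → v = a ∨ v ∈ p.support ∨ v = b → G.Adj u v →
          s(u, v) ∈ W.edges := by
        intro u1 v1 hu1 hv1 hadj1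
        rcases hv1 with rfl | hv1 | rfl
        · -- v1 = a
          by_cases hux : u1 = x
          · subst hux
            rw [Sym2.eq_swap, hWe]
            exact List.mem_cons_self
          by_cases huy : u1 = y
          · subst huy
            exact absurd hadj1.symm hnay
          · exact absurd (haS ⟨hax.ne, hay, u1, hu1, hux, huy, Or.inr hadj1⟩) not_false
        · rw [hWe]
          exact List.mem_cons_of_mem _ (List.mem_append_left _ (hp.2 u1 hu1 v1 hv1 hadj1))
        · -- v1 = b
          by_cases huy : u1 = y
          · subst huy
            rw [hWe]
            exact List.mem_cons_of_mem _ (List.mem_append_right _ (List.mem_singleton_self _))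
          by_cases hux : u1 = x
          · subst hux
            exact absurd hadj1 hnxb
          · exact absurd (hbS ⟨hbx, hyb.ne', u1, hu1, hux, huy, Or.inr hadj1⟩) not_false
      rcases hu with rfl | hu | rfl
      · -- u = a
        rcases hv with rfl | hv | rfl
        · exact absurd rfl hadj.ne
        · rw [Sym2.eq_swap]
          exact hcase v u hv (Or.inl rfl) hadj.symm
        · exact absurd hadj hnab
      · exact hcase u v hu hv hadj
      · -- u = b
        rcases hv with rfl | hv | rfl
        · exact absurd hadj.symm hnab
        · rw [Sym2.eq_swap]
          exact hcase v u hv (Or.inr (Or.inr rfl)) hadj.symm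
        · exact absurd rfl hadj.ne
    obtain ⟨v0, C, ⟨hCcyc, hCind⟩, hWsubC⟩ := hAP a b hax hyb hWind
    have haC : a ∈ C.support := hWsubC a (by rw [hWs]; exact List.mem_cons_self)
    have hbC : b ∈ C.support := hWsubC b (by
      rw [hWs]
      exact List.mem_cons_of_mem _ (List.mem_append_right _ (List.mem_singleton_self _)))
    have hpsubC : ∀ w ∈ p.support, w ∈ C.support := fun w hw => hWsubC w (by
      rw [hWs]; exact List.mem_cons_of_mem _ (List.mem_append_left _ hw))
    have hxC : x ∈ C.support := hpsubC x p.start_mem_support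
    -- rotate at x
    have hC1cyc : (C.rotate x hxC).IsCycle := hCcyc.rotate hxC
    have hC1supp : ∀ u, u ∈ (C.rotate x hxC).support ↔ u ∈ C.support :=
      fun u => mem_support_rotate_iff hCcyc hxC
    have hC1edges : ∀ e, e ∈ (C.rotate x hxC).edges ↔ e ∈ C.edges :=
      fun e => mem_edges_rotate_iff hxC
    have hsubp : ∀ e ∈ p.edges, e ∈ (C.rotate x hxC).edges := by
      intro e
      induction e using Sym2.ind with
      | _ u v =>
        intro he
        have hu := hpsubC u (p.fst_mem_support_of_mem_edges he)
        have hv := hpsubC v (p.snd_mem_support_of_mem_edges he)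
        exact (hC1edges _).mpr (hCind u hu v hv (p.adj_of_mem_edges he))
    have hplen : 0 < p.length := by omega
    obtain ⟨C2, r, hC2cyc, hC2s, hC2e, hC2eq⟩ := cycle_decompose hC1cyc hp.1 hplen hsubp
    have hsupp2 : ∀ u, u ∈ C2.support ↔ u ∈ C.support := fun u => (hC2s u).trans (hC1supp u)
    have hedges2 : ∀ e, e ∈ C2.edges ↔ e ∈ C.edges := fun e => (hC2e e).trans (hC1edges e)
    -- r is a path
    obtain ⟨x1, hadj1, pt, hpt⟩ := SimpleGraph.Walk.exists_eq_cons_of_ne hxy p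
    have hC2cons : C2 = SimpleGraph.Walk.cons hadj1 (pt.append r) := by
      rw [hC2eq, hpt, SimpleGraph.Walk.cons_append]
    have hC2cyc' : (SimpleGraph.Walk.cons hadj1 (pt.append r)).IsCycle := hC2cons ▸ hC2cyc
    have hptr : (pt.append r).IsPath := ((SimpleGraph.Walk.cons_isCycle_iff _ _).mp hC2cyc').1
    have hrpath : r.IsPath := hptr.of_append_right
    -- intersection of supports
    have hC2supp_eq : C2.support = p.support ++ r.support.tail := by
      rw [hC2eq]; exact SimpleGraph.Walk.support_append _ _
    have htail : C2.support.tail = p.support.tail ++ r.support.tail := by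
      rw [hC2supp_eq, p.support_eq_cons]; rfl
    have hnd := hC2cyc.support_nodup
    rw [htail, List.nodup_append'] at hnd
    have hinter : ∀ w, w ∈ p.support → w ∈ r.support → w = x ∨ w = y := by
      intro w hwp hwr
      by_contra h
      push_neg at h
      have h1 : w ∈ p.support.tail := by
        rw [p.support_eq_cons, List.mem_cons] at hwp
        rcases hwp with h2 | h2
        · exact absurd h2 h.1
        · exact h2
      have h2 : w ∈ r.support.tail := by
        rw [r.support_eq_cons, List.mem_cons] at hwr
        rcases hwr with h2 | h2
        · exact absurd h2 h.2
        · exact h2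
      exact hnd.2.2 h1 h2
    have hrsubC2 : ∀ w ∈ r.support, w ∈ C2.support := by
      intro w hw
      rw [hC2supp_eq, List.mem_append]
      rw [r.support_eq_cons, List.mem_cons] at hw
      rcases hw with rfl | hw
      · exact Or.inl p.end_mem_support
      · exact Or.inr hw
    have hrS : ∀ w ∈ r.support, w ∈ S := by
      intro w hw hmem
      obtain ⟨hwx, hwy, u, hu, hux, huy, hor⟩ := hmem
      rcases hor with rfl | hadj
      · rcases hinter w hu hw with h | h
        · exact hwx h
        · exact hwy h
      · have huC : u ∈ C.support := (hsupp2 u).mp (by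
          rw [hC2supp_eq, List.mem_append]; exact Or.inl hu)
        have hwC : w ∈ C.support := (hsupp2 w).mp (hrsubC2 w hw)
        have he2 : s(u, w) ∈ C2.edges := (hedges2 _).mpr (hCind u huC w hwC hadj)
        rw [hC2eq, SimpleGraph.Walk.edges_append, List.mem_append] at he2
        rcases he2 with he2 | he2
        · have hw2 := p.snd_mem_support_of_mem_edges he2
          rcases hinter w hw2 hw with h | h
          · exact hwx h
          · exact hwy h
        · have hu2 := r.fst_mem_support_of_mem_edges he2
          rcases hinter u hu hu2 with h | h
          · exact hux h
          · exact huy h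
    have harsupp : a ∈ r.support := by
      have h2 : a ∈ C2.support := (hsupp2 a).mpr haC
      rw [hC2supp_eq, List.mem_append] at h2
      rcases h2 with h2 | h2
      · exact absurd h2 hanp
      · exact List.mem_of_mem_tail h2
    have hbrsupp : b ∈ r.support := by
      have h2 : b ∈ C2.support := (hsupp2 b).mpr hbC
      rw [hC2supp_eq, List.mem_append] at h2
      rcases h2 with h2 | h2
      · exact absurd h2 hbnp
      · exact List.mem_of_mem_tail h2
    -- lift r to G2
    set r' : G2.Walk y' x' :=
      liftWalk (H := G ⊔ fromEdgeSet {s(x, y)}) (s := S) hGle r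
        (fun h => h.2.1 rfl) (fun h => h.1 rfl) hrS with hr'def
    have hr's : r'.support.map Subtype.val = r.support := liftWalk_support hGle r _ _ _
    have hr'e : r'.edges.map (Sym2.map Subtype.val) = r.edges := liftWalk_edges hGle r _ _ _
    have hr'path : r'.IsPath := by
      apply SimpleGraph.Walk.IsPath.mk'
      have h1 : (r'.support.map Subtype.val).Nodup := by
        rw [hr's]; exact hrpath.support_nodup
      exact h1.of_map
    have hnotedge : s(x', y') ∉ r'.edges := by
      intro h
      have h2 : s(x, y) ∈ r.edges := by
        rw [← hr'e, List.mem_map]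
        exact ⟨s(x', y'), h, by rw [Sym2.map_pair_eq]⟩
      exact hnadj (r.adj_of_mem_edges h2)
    have hccyc : (SimpleGraph.Walk.cons hxy' r').IsCycle :=
      (SimpleGraph.Walk.cons_isCycle_iff r' hxy').mpr ⟨hr'path, hnotedge⟩
    have hmemr' : ∀ w (hw : w ∈ r.support), (⟨w, hrS w hw⟩ : S) ∈ r'.support := by
      intro w hw
      have h1 : w ∈ r'.support.map Subtype.val := by rw [hr's]; exact hw
      rw [List.mem_map] at h1
      obtain ⟨w', hw', hww⟩ := h1
      have h2 : w' = ⟨w, hrS w hw⟩ := Subtype.ext hww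
      rwa [h2] at hw'
    have hcind : ∀ u' ∈ (SimpleGraph.Walk.cons hxy' r').support,
        ∀ v' ∈ (SimpleGraph.Walk.cons hxy' r').support, G2.Adj u' v' →
        s(u', v') ∈ (SimpleGraph.Walk.cons hxy' r').edges := by
      intro u' hu' v' hv' hadj'
      have hu'r : u' ∈ r'.support := by
        rw [SimpleGraph.Walk.support_cons, List.mem_cons] at hu'
        rcases hu' with rfl | h
        · exact r'.end_mem_support
        · exact h
      have hv'r : v' ∈ r'.support := by
        rw [SimpleGraph.Walk.support_cons, List.mem_cons] at hv'
        rcases hv' with rfl | h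
        · exact r'.end_mem_support
        · exact h
      have hur : (u' : V) ∈ r.support := by
        rw [← hr's]; exact List.mem_map_of_mem hu'r
      have hvr : (v' : V) ∈ r.support := by
        rw [← hr's]; exact List.mem_map_of_mem hv'r
      rcases (hG'adj2 u' v').mp hadj' with hadj | ⟨he, hne⟩
      · have he2 : s((u' : V), (v' : V)) ∈ C2.edges := (hedges2 _).mpr
          (hCind _ ((hsupp2 _).mp (hrsubC2 _ hur)) _ ((hsupp2 _).mp (hrsubC2 _ hvr)) hadj)
        rw [hC2eq, SimpleGraph.Walk.edges_append, List.mem_append] at he2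
        rcases he2 with he2 | he2
        · exfalso
          have h1 := p.fst_mem_support_of_mem_edges he2
          have h2 := p.snd_mem_support_of_mem_edges he2
          have hne2 : (u' : V) ≠ (v' : V) := hadj.ne
          rcases hinter _ h1 hur with h1' | h1' <;> rcases hinter _ h2 hvr with h2' | h2'
          · rw [h1', h2'] at hne2; exact hne2 rfl
          · rw [h1', h2'] at hadj; exact hnadj hadj
          · rw [h1', h2'] at hadj; exact hnadj hadj.symm
          · rw [h1', h2'] at hne2; exact hne2 rfl
        · have h3 : s((u' : V), (v' : V)) ∈ r'.edges.map (Sym2.map Subtype.val) := by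
            rw [hr'e]; exact he2
          rw [List.mem_map] at h3
          obtain ⟨e', he', hee⟩ := h3
          have h4 : e' = s(u', v') :=
            Sym2.map.injective Subtype.val_injective (by rw [hee, Sym2.map_pair_eq])
          rw [SimpleGraph.Walk.edges_cons]
          exact List.mem_cons_of_mem _ (h4 ▸ he')
      · have h4 : s(u', v') = s(x', y') :=
          Sym2.map.injective Subtype.val_injective (by rw [Sym2.map_pair_eq, Sym2.map_pair_eq]; exact he)
        rw [h4, SimpleGraph.Walk.edges_cons]
        exact List.mem_cons_self
    refine ⟨x', SimpleGraph.Walk.cons hxy' r', ⟨hccyc, hcind⟩, ?_, ?_, ?_, ?_⟩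
    · rw [SimpleGraph.Walk.support_cons]
      exact List.mem_cons_of_mem _ (hmemr' a harsupp)
    · exact SimpleGraph.Walk.start_mem_support _
    · rw [SimpleGraph.Walk.support_cons]
      exact List.mem_cons_of_mem _ r'.start_mem_support
    · rw [SimpleGraph.Walk.support_cons]
      exact List.mem_cons_of_mem _ (hmemr' b hbrsupp)
  · -- AvoidableEdge → AvoidablePath
    intro hAE a b hax hyb hW
    set W := (SimpleGraph.Walk.cons hax p).concat hyb with hWdef
    have hWc : W = SimpleGraph.Walk.cons hax (p.concat hyb) := SimpleGraph.Walk.concat_cons _ _ _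
    have hWs : W.support = a :: (p.support ++ [b]) := by
      rw [hWc, SimpleGraph.Walk.support_cons, SimpleGraph.Walk.support_concat]
    have hWe : W.edges = s(a, x) :: (p.edges ++ [s(y, b)]) := by
      rw [hWc, SimpleGraph.Walk.edges_cons, SimpleGraph.Walk.edges_concat, List.concat_eq_append]
    have hWpath : W.IsPath := hW.1
    have hpsubW : ∀ w ∈ p.support, w ∈ W.support := by
      intro w hw
      rw [hWs]
      exact List.mem_cons_of_mem _ (List.mem_append_left _ hw)
    have haW : a ∈ W.support := by rw [hWs]; exact List.mem_cons_self
    have hbW : b ∈ W.support := by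
      rw [hWs]
      exact List.mem_cons_of_mem _ (List.mem_append_right _ (List.mem_singleton_self _))
    have haxe : s(a, x) ∈ W.edges := by rw [hWe]; exact List.mem_cons_self
    have hybe : s(y, b) ∈ W.edges := by
      rw [hWe]
      exact List.mem_cons_of_mem _ (List.mem_append_right _ (List.mem_singleton_self _))
    have hanp : a ∉ p.support := by
      have h1 := hWpath
      rw [hWc, SimpleGraph.Walk.cons_isPath_iff] at h1
      intro hmem
      exact h1.2 (by
        rw [SimpleGraph.Walk.support_concat]
        exact List.mem_append_left _ hmem)
    have hbnp : b ∉ p.support := by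
      intro hmem
      have hnd := hWpath.support_nodup
      rw [hWs, List.nodup_cons] at hnd
      rw [List.nodup_append'] at hnd
      exact hnd.2.2.2 hmem (List.mem_singleton_self b)
    have hab : a ≠ b := by
      intro h
      subst h
      have hnd := hWpath.support_nodup
      rw [hWs, List.nodup_cons] at hnd
      exact hnd.1 (List.mem_append_right _ (List.mem_singleton_self _))
    have hay : a ≠ y := fun h => hanp (h ▸ p.end_mem_support)
    have hbx : b ≠ x := fun h => hbnp (h ▸ p.start_mem_support)
    have hauniq : ∀ c, s(a, c) ∈ W.edges → c = x := fun c hc =>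
      start_edge_unique hWpath hc haxe
    have hbuniq : ∀ c, s(b, c) ∈ W.edges → c = y := by
      intro c hc
      have h1 : s(b, c) ∈ W.reverse.edges := by
        rw [SimpleGraph.Walk.edges_reverse, List.mem_reverse]; exact hc
      have h2 : s(b, y) ∈ W.reverse.edges := by
        rw [SimpleGraph.Walk.edges_reverse, List.mem_reverse, Sym2.eq_swap]; exact hybe
      exact start_edge_unique hWpath.reverse h1 h2
    have haS : a ∈ S := by
      intro hmem
      obtain ⟨h1, h2, w, hw, hwx, hwy, hor⟩ := hmem
      rcases hor with rfl | hadj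
      · exact hanp hw
      · have he := hW.2 w (hpsubW w hw) a haW hadj
        rw [Sym2.eq_swap] at he
        exact hwx (hauniq w he)
    have hbS : b ∈ S := by
      intro hmem
      obtain ⟨h1, h2, w, hw, hwx, hwy, hor⟩ := hmem
      rcases hor with rfl | hadj
      · exact hbnp hw
      · have he := hW.2 w (hpsubW w hw) b hbW hadj
        rw [Sym2.eq_swap] at he
        exact hwy (hbuniq w he)
    -- the middle P4 in G2
    have hM : IsMiddleP4 G2 x' y' ⟨a, haS⟩ ⟨b, hbS⟩ := by
      refine ⟨?_, ?_, ?_, ?_, ?_, ?_, ?_, ?_⟩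
      · exact (hG'adj2 _ _).mpr (Or.inl hax)
      · exact (hG'adj2 _ _).mpr (Or.inl hyb)
      · intro h
        rcases (hG'adj2 _ _).mp h with h2 | ⟨he, -⟩
        · have h3 := hW.2 a haW y (hpsubW y p.end_mem_support) h2
          exact hxy (hauniq y h3).symm
        · rw [Sym2.eq_iff] at he
          rcases he with ⟨hax2, -⟩ | ⟨-, hyx2⟩
          · exact hax.ne hax2
          · exact hxy hyx2.symm
      · intro h
        rcases (hG'adj2 _ _).mp h with h2 | ⟨he, -⟩
        · have h3 := hW.2 x (hpsubW x p.start_mem_support) b hbW h2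
          rw [Sym2.eq_swap] at h3
          exact hxy (hbuniq x h3)
        · rw [Sym2.eq_iff] at he
          rcases he with ⟨-, hby2⟩ | ⟨hxy2, -⟩
          · exact hyb.ne' hby2
          · exact hxy hxy2
      · intro h
        rcases (hG'adj2 _ _).mp h with h2 | ⟨he, -⟩
        · have h3 := hW.2 a haW b hbW h2
          exact hbx (hauniq b h3)
        · rw [Sym2.eq_iff] at he
          rcases he with ⟨hax2, -⟩ | ⟨hay2, -⟩
          · exact hax.ne hax2
          · exact hay hay2
      · exact fun h => hay (congrArg Subtype.val h)
      · exact fun h => hbx (congrArg Subtype.val h)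
      · exact fun h => hab (congrArg Subtype.val h)
    obtain ⟨v', c', ⟨hc'cyc, hc'ind⟩, hac, hxc, hyc, hbc⟩ := hAE ⟨a, haS⟩ ⟨b, hbS⟩ hM
    -- rotate at x'
    have hc1cyc : (c'.rotate x' hxc).IsCycle := hc'cyc.rotate hxc
    have hc1supp : ∀ u', u' ∈ (c'.rotate x' hxc).support ↔ u' ∈ c'.support :=
      fun u' => mem_support_rotate_iff hc'cyc hxc
    have hc1edges : ∀ e, e ∈ (c'.rotate x' hxc).edges ↔ e ∈ c'.edges :=
      fun e => mem_edges_rotate_iff hxc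
    have hexy : s(x', y') ∈ (c'.rotate x' hxc).edges :=
      (hc1edges _).mpr (hc'ind x' hxc y' hyc hxy')
    obtain ⟨C2, hC2cyc, hC2supp, hC2edges, hadj2, q, hC2⟩ := cycle_start_edge hc1cyc hexy
    have hsupp2 : ∀ u', u' ∈ C2.support ↔ u' ∈ c'.support :=
      fun u' => (hC2supp u').trans (hc1supp u')
    have hedges2 : ∀ e, e ∈ C2.edges ↔ e ∈ c'.edges :=
      fun e => (hC2edges e).trans (hc1edges e)
    have hC2cyc' : (SimpleGraph.Walk.cons hadj2 q).IsCycle := hC2 ▸ hC2cyc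
    have hqpath : q.IsPath := ((SimpleGraph.Walk.cons_isCycle_iff q hadj2).mp hC2cyc').1
    have hqnedge : s(x', y') ∉ q.edges := ((SimpleGraph.Walk.cons_isCycle_iff q hadj2).mp hC2cyc').2
    -- project q to G
    have hqedgeG : ∀ e ∈ q.edges, Sym2.map Subtype.val e ∈ G.edgeSet := by
      intro e
      induction e using Sym2.ind with
      | _ u' v' =>
        intro he
        have hadjq : G2.Adj u' v' := q.adj_of_mem_edges he
        rcases (hG'adj2 u' v').mp hadjq with h | ⟨hsym, hne⟩
        · rw [Sym2.map_pair_eq, SimpleGraph.mem_edgeSet]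
          exact h
        · exfalso
          rw [Sym2.eq_iff] at hsym
          rcases hsym with ⟨h1, h2⟩ | ⟨h1, h2⟩
          · have hu : u' = x' := Subtype.ext h1
            have hv : v' = y' := Subtype.ext h2
            rw [hu, hv] at he
            exact hqnedge he
          · have hu : u' = y' := Subtype.ext h1
            have hv : v' = x' := Subtype.ext h2
            rw [hu, hv, Sym2.eq_swap] at he
            exact hqnedge he
    -- the projected walk
    set Q : G.Walk y x := projWalk Subtype.val G q hqedgeG with hQdef
    have hQsupp : Q.support = q.support.map Subtype.val := projWalk_support _ _ _ _
    have hQedges : Q.edges = q.edges.map (Sym2.map Subtype.val) := projWalk_edges _ _ _ _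
    have hQpath : Q.IsPath := by
      apply SimpleGraph.Walk.IsPath.mk'
      rw [hQsupp]
      exact hqpath.support_nodup.map Subtype.val_injective
    have hQS : ∀ w ∈ Q.support, w ∈ S := by
      intro w hw
      rw [hQsupp, List.mem_map] at hw
      obtain ⟨w', -, rfl⟩ := hw
      exact w'.2
    have hQx : x ∈ Q.support := Q.end_mem_support
    have hQy : y ∈ Q.support := Q.start_mem_support
    have hCs : (p.append Q).support = p.support ++ Q.support.tail :=
      SimpleGraph.Walk.support_append _ _
    have hCe : (p.append Q).edges = p.edges ++ Q.edges := SimpleGraph.Walk.edges_append _ _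
    have hQsubC : ∀ w ∈ Q.support, w ∈ (p.append Q).support := by
      intro w hw
      rw [hCs]
      rw [Q.support_eq_cons, List.mem_cons] at hw
      rcases hw with rfl | hw
      · exact List.mem_append_left _ p.end_mem_support
      · exact List.mem_append_right _ hw
    have hpsubC : ∀ w ∈ p.support, w ∈ (p.append Q).support := by
      intro w hw
      rw [hCs]
      exact List.mem_append_left _ hw
    have hmemQ : ∀ (u' : S), u' ∈ c'.support → (u' : V) ∈ Q.support := by
      intro u' hu
      have h2 : u' ∈ C2.support := (hsupp2 u').mpr hu
      rw [hC2, SimpleGraph.Walk.support_cons, List.mem_cons] at h2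
      rcases h2 with rfl | h2
      · exact hQx
      · rw [hQsupp, List.mem_map]
        exact ⟨u', h2, rfl⟩
    -- edges of p and Q are disjoint
    have hpedS : ∀ e ∈ p.edges, e ∉ Q.edges := by
      intro e
      induction e using Sym2.ind with
      | _ u v =>
        intro hep heq
        have hu := hnotint u (p.fst_mem_support_of_mem_edges hep)
          (hQS u (Q.fst_mem_support_of_mem_edges heq))
        have hv := hnotint v (p.snd_mem_support_of_mem_edges hep)
          (hQS v (Q.snd_mem_support_of_mem_edges heq))
        have huv : G.Adj u v := p.adj_of_mem_edges hep
        rcases hu with h1 | h1 <;> rcases hv with h2 | h2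
        · rw [h1, h2] at huv; exact huv.ne rfl
        · rw [h1, h2] at huv; exact hnadj huv
        · rw [h1, h2] at huv; exact hnadj huv.symm
        · rw [h1, h2] at huv; exact huv.ne rfl
    -- the glued cycle
    have hCcyc : (p.append Q).IsCycle := by
      rw [SimpleGraph.Walk.isCycle_def]
      refine ⟨?_, ?_, ?_⟩
      · rw [SimpleGraph.Walk.isTrail_def, hCe, List.nodup_append']
        exact ⟨hp.1.edges_nodup, hQpath.edges_nodup, fun e he1 he2 => hpedS e he1 he2⟩
      · intro h
        have h2 := congrArg SimpleGraph.Walk.length h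
        rw [SimpleGraph.Walk.length_append, SimpleGraph.Walk.length_nil] at h2
        omega
      · have htl : (p.append Q).support.tail = p.support.tail ++ Q.support.tail := by
          rw [hCs, p.support_eq_cons]; rfl
        rw [htl, List.nodup_append']
        have hpn := hp.1.support_nodup
        rw [p.support_eq_cons, List.nodup_cons] at hpn
        have hQn := hQpath.support_nodup
        rw [Q.support_eq_cons, List.nodup_cons] at hQn
        refine ⟨hpn.2, hQn.2, ?_⟩
        intro w hw1 hw2
        have hwx : w ≠ x := fun h => hpn.1 (h ▸ hw1)
        have hwy : w ≠ y := fun h => hQn.1 (h ▸ hw2)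
        have hwS : w ∈ S := hQS w (List.mem_of_mem_tail hw2)
        exact hwS ⟨hwx, hwy, w, List.mem_of_mem_tail hw1, hwx, hwy, Or.inl rfl⟩
    -- induced
    have hQQ : ∀ u v : V, u ∈ Q.support → v ∈ Q.support → G.Adj u v →
        s(u, v) ∈ (p.append Q).edges := by
      intro u v hu hv hadj
      rw [hQsupp, List.mem_map] at hu hv
      obtain ⟨u', hu', rfl⟩ := hu
      obtain ⟨v', hv', rfl⟩ := hv
      have hadj' : G2.Adj u' v' := (hG'adj2 u' v').mpr (Or.inl hadj)
      have hu'c : u' ∈ c'.support := (hsupp2 u').mp (by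
        rw [hC2, SimpleGraph.Walk.support_cons]
        exact List.mem_cons_of_mem _ hu')
      have hv'c : v' ∈ c'.support := (hsupp2 v').mp (by
        rw [hC2, SimpleGraph.Walk.support_cons]
        exact List.mem_cons_of_mem _ hv')
      have he2 : s(u', v') ∈ C2.edges := (hedges2 _).mpr (hc'ind u' hu'c v' hv'c hadj')
      rw [hC2, SimpleGraph.Walk.edges_cons, List.mem_cons] at he2
      rcases he2 with he2 | he2
      · exfalso
        rw [Sym2.eq_iff] at he2
        rcases he2 with ⟨h1, h2⟩ | ⟨h1, h2⟩
        · rw [congrArg Subtype.val h1, congrArg Subtype.val h2] at hadj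
          exact hnadj hadj
        · rw [congrArg Subtype.val h1, congrArg Subtype.val h2] at hadj
          exact hnadj hadj.symm
      · rw [hCe]
        refine List.mem_append_right _ ?_
        rw [hQedges, List.mem_map]
        exact ⟨s(u', v'), he2, by rw [Sym2.map_pair_eq]⟩
    have hPP : ∀ u v : V, u ∈ p.support → v ∈ p.support → G.Adj u v →
        s(u, v) ∈ (p.append Q).edges := by
      intro u v hu hv hadj
      rw [hCe]
      exact List.mem_append_left _ (hp.2 u hu v hv hadj)
    have hPQ : ∀ u v : V, u ∈ p.support → v ∈ Q.support → G.Adj u v →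
        s(u, v) ∈ (p.append Q).edges := by
      intro u v hu hv hadj
      by_cases hux : u = x
      · exact hQQ u v (hux ▸ hQx) hv hadj
      by_cases huy : u = y
      · exact hQQ u v (huy ▸ hQy) hv hadj
      by_cases hvx : v = x
      · exact hPP u v hu (hvx ▸ p.start_mem_support) hadj
      by_cases hvy : v = y
      · exact hPP u v hu (hvy ▸ p.end_mem_support) hadj
      · exact absurd (hQS v hv ⟨hvx, hvy, u, hu, hux, huy, Or.inr hadj⟩) not_false
    have hCind : ∀ u ∈ (p.append Q).support, ∀ v ∈ (p.append Q).support, G.Adj u v →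
        s(u, v) ∈ (p.append Q).edges := by
      intro u hu v hv hadj
      have hu2 : u ∈ p.support ∨ u ∈ Q.support := by
        rw [hCs, List.mem_append] at hu
        rcases hu with h | h
        · exact Or.inl h
        · exact Or.inr (List.mem_of_mem_tail h)
      have hv2 : v ∈ p.support ∨ v ∈ Q.support := by
        rw [hCs, List.mem_append] at hv
        rcases hv with h | h
        · exact Or.inl h
        · exact Or.inr (List.mem_of_mem_tail h)
      rcases hu2 with hu2 | hu2 <;> rcases hv2 with hv2 | hv2
      · exact hPP u v hu2 hv2 hadj
      · exact hPQ u v hu2 hv2 hadj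
      · rw [Sym2.eq_swap]
        exact hPQ v u hv2 hu2 hadj.symm
      · exact hQQ u v hu2 hv2 hadj
    refine ⟨x, p.append Q, ⟨hCcyc, hCind⟩, ?_⟩
    intro w hw
    rw [hWs, List.mem_cons, List.mem_append, List.mem_singleton] at hw
    rcases hw with rfl | hw | rfl
    · exact hQsubC _ (hmemQ _ hac)
    · exact hpsubC _ hw
    · exact hQsubC _ (hmemQ _ hbc)
end

section
/- Let P be an induced path on k ≥ 3 vertices in a finite simple graph G with endpoints x and y, and let H = G + xy − I[P] with I[P] = N[in(P)] \ {x,y}. Then there exists an induced path on k+2 vertices in G containing P as an internal path if and only if there exists an induced P₄ in H having xy as its middle edge. -/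
open SimpleGraph

/-- There is an induced path on `k + 2` vertices in `G` containing `P` (an
induced path on `k ≥ 3` vertices with endpoints `x, y`) as an internal path iff
there is an induced `P₄` in `H = G + xy − I[P]` having `xy` as its middle edge. -/
theorem exists_extension_iff_exists_middleP4 {V : Type*} [Fintype V]
    (G : SimpleGraph V) (x y : V) (p : G.Walk x y)
    (hp : IsInducedPath G p) (hk : 2 ≤ p.length) :
    (∃ (a b : V) (hax : G.Adj a x) (hyb : G.Adj y b),
        IsInducedPath G ((SimpleGraph.Walk.cons hax p).concat hyb)) ↔
      (∃ a b : ((pathClosure G p)ᶜ : Set V),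
        IsMiddleP4 ((G ⊔ fromEdgeSet {s(x, y)}).induce (pathClosure G p)ᶜ)
          ⟨x, fun h => h.1 rfl⟩ ⟨y, fun h => h.2.1 rfl⟩ a b) := by
  obtain ⟨hpath, hind⟩ := hp
  have hxy : x ≠ y := by
    rintro rfl
    rw [Walk.isPath_iff_eq_nil] at hpath
    subst hpath
    simp at hk
  have hxS : x ∈ p.support := p.start_mem_support
  have hyS : y ∈ p.support := p.end_mem_support
  constructor
  · rintro ⟨a, b, hax, hyb, hqpath, hqind⟩
    have hsup : ((Walk.cons hax p).concat hyb).support = a :: (p.support ++ [b]) := by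
      simp [Walk.support_concat, Walk.support_cons, List.concat_eq_append]
    have hedg : ((Walk.cons hax p).concat hyb).edges
        = s(a,x) :: (p.edges ++ [s(y,b)]) := by
      simp [Walk.edges_concat, Walk.edges_cons, List.concat_eq_append]
    have hnd := hqpath.support_nodup
    rw [hsup] at hnd
    have h1 := List.nodup_cons.mp hnd
    have haP : a ∉ p.support := fun h => h1.1 (List.mem_append_left _ h)
    have hab : a ≠ b := fun h => h1.1 (List.mem_append_right _ (by simp [h]))
    have hbP : b ∉ p.support := fun h =>
      (List.disjoint_right.mp (List.nodup_append'.mp h1.2).2.2) (by simp) h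
    have hamem : a ∈ ((Walk.cons hax p).concat hyb).support := by rw [hsup]; simp
    have hbmem : b ∈ ((Walk.cons hax p).concat hyb).support := by rw [hsup]; simp
    have hA : ∀ v ∈ p.support, G.Adj a v → v = x := by
      intro v hv hadj
      have he := hqind a hamem v (by rw [hsup]; simp [hv]) hadj
      rw [hedg] at he
      simp only [List.mem_cons, List.mem_append, List.mem_singleton, List.not_mem_nil, or_false] at he
      rcases he with he | he | he
      · rcases Sym2.eq_iff.mp he with ⟨-, h2⟩ | ⟨h1', -⟩
        · exact h2
        · exact absurd h1' hax.ne
      · exact absurd (Walk.fst_mem_support_of_mem_edges p he) haP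
      · rcases Sym2.eq_iff.mp he with ⟨h1', -⟩ | ⟨h1', -⟩
        · exact absurd (h1' ▸ hyS) haP
        · exact absurd h1' hab
    have hB : ∀ v ∈ p.support, G.Adj b v → v = y := by
      intro v hv hadj
      have he := hqind b hbmem v (by rw [hsup]; simp [hv]) hadj
      rw [hedg] at he
      simp only [List.mem_cons, List.mem_append, List.mem_singleton, List.not_mem_nil, or_false] at he
      rcases he with he | he | he
      · rcases Sym2.eq_iff.mp he with ⟨h1', -⟩ | ⟨h1', -⟩
        · exact absurd h1'.symm hab
        · exact absurd (h1' ▸ hxS) hbP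
      · exact absurd (Walk.fst_mem_support_of_mem_edges p he) hbP
      · rcases Sym2.eq_iff.mp he with ⟨-, h2'⟩ | ⟨-, h2'⟩
        · exact absurd (h2' ▸ hv) hbP
        · exact h2'
    have hAB : ¬ G.Adj a b := by
      intro hadj
      have he := hqind a hamem b hbmem hadj
      rw [hedg] at he
      simp only [List.mem_cons, List.mem_append, List.mem_singleton, List.not_mem_nil, or_false] at he
      rcases he with he | he | he
      · rcases Sym2.eq_iff.mp he with ⟨-, h2'⟩ | ⟨h1', -⟩
        · exact hbP (h2' ▸ hxS)
        · exact hax.ne h1'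
      · exact haP (Walk.fst_mem_support_of_mem_edges p he)
      · rcases Sym2.eq_iff.mp he with ⟨h1', -⟩ | ⟨h1', -⟩
        · exact haP (h1' ▸ hyS)
        · exact hab h1'
    have hacl : a ∉ pathClosure G p := by
      rintro ⟨-, -, w, hw, hwx, -, (rfl | hadj)⟩
      · exact haP hw
      · exact hwx (hA w hw hadj.symm)
    have hbcl : b ∉ pathClosure G p := by
      rintro ⟨-, -, w, hw, -, hwy, (rfl | hadj)⟩
      · exact hbP hw
      · exact hwy (hB w hw hadj.symm)
    refine ⟨⟨a, hacl⟩, ⟨b, hbcl⟩, ?_, ?_, ?_, ?_, ?_, ?_, ?_, ?_⟩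
    · simp only [comap_adj, Function.Embedding.coe_subtype, sup_adj, fromEdgeSet_adj]
      exact Or.inl hax
    · simp only [comap_adj, Function.Embedding.coe_subtype, sup_adj, fromEdgeSet_adj]
      exact Or.inl hyb
    · intro hcon
      simp only [comap_adj, Function.Embedding.coe_subtype, sup_adj, fromEdgeSet_adj,
        Set.mem_singleton_iff] at hcon
      rcases hcon with h | ⟨h, -⟩
      · exact hxy (hA y hyS h).symm
      · rcases Sym2.eq_iff.mp h with ⟨h1', -⟩ | ⟨-, h2'⟩
        · exact hax.ne h1'
        · exact hxy h2'.symm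
    · intro hcon
      simp only [comap_adj, Function.Embedding.coe_subtype, sup_adj, fromEdgeSet_adj,
        Set.mem_singleton_iff] at hcon
      rcases hcon with h | ⟨h, -⟩
      · exact hxy (hB x hxS h.symm)
      · rcases Sym2.eq_iff.mp h with ⟨-, h2'⟩ | ⟨h1', -⟩
        · exact hbP (h2' ▸ hyS)
        · exact hxy h1'
    · intro hcon
      simp only [comap_adj, Function.Embedding.coe_subtype, sup_adj, fromEdgeSet_adj,
        Set.mem_singleton_iff] at hcon
      rcases hcon with h | ⟨h, -⟩
      · exact hAB h
      · rcases Sym2.eq_iff.mp h with ⟨h1', -⟩ | ⟨h1', -⟩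
        · exact hax.ne h1'
        · exact haP (h1' ▸ hyS)
    · intro h
      exact haP ((Subtype.mk.inj h) ▸ hyS)
    · intro h
      exact hbP ((Subtype.mk.inj h) ▸ hxS)
    · intro h
      exact hab (Subtype.mk.inj h)
  · rintro ⟨⟨a, ha⟩, ⟨b, hb⟩, h1, h2, h3, h4, h5, h6, h7, h8⟩
    simp only [comap_adj, Function.Embedding.coe_subtype, sup_adj, fromEdgeSet_adj,
      Set.mem_singleton_iff] at h1 h2 h3 h4 h5
    have hay : a ≠ y := fun h => h6 (Subtype.ext h)
    have hbx : b ≠ x := fun h => h7 (Subtype.ext h)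
    have hab : a ≠ b := fun h => h8 (Subtype.ext h)
    have hax : G.Adj a x := by
      rcases h1 with h | ⟨h, -⟩
      · exact h
      · rcases Sym2.eq_iff.mp h with ⟨-, h2'⟩ | ⟨h1', -⟩
        · exact absurd h2' hxy
        · exact absurd h1' hay
    have hyb : G.Adj y b := by
      rcases h2 with h | ⟨h, -⟩
      · exact h
      · rcases Sym2.eq_iff.mp h with ⟨h1', -⟩ | ⟨-, h2'⟩
        · exact absurd h1'.symm hxy
        · exact absurd h2' hbx
    have hnay : ¬ G.Adj a y := fun h => h3 (Or.inl h)
    have hnxb : ¬ G.Adj x b := fun h => h4 (Or.inl h)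
    have hnab : ¬ G.Adj a b := fun h => h5 (Or.inl h)
    have haP : a ∉ p.support := fun h =>
      ha ⟨hax.ne, hay, a, h, hax.ne, hay, Or.inl rfl⟩
    have hbP : b ∉ p.support := fun h =>
      hb ⟨hbx, hyb.ne', b, h, hbx, hyb.ne', Or.inl rfl⟩
    have hA : ∀ v ∈ p.support, G.Adj a v → v = x := by
      intro v hv hadj
      by_contra hvx
      by_cases hvy : v = y
      · exact hnay (hvy ▸ hadj)
      · exact ha ⟨hax.ne, hay, v, hv, hvx, hvy, Or.inr hadj.symm⟩
    have hB : ∀ v ∈ p.support, G.Adj b v → v = y := by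
      intro v hv hadj
      by_contra hvy
      by_cases hvx : v = x
      · exact hnxb (hvx ▸ hadj.symm)
      · exact hb ⟨hbx, hyb.ne', v, hv, hvx, hvy, Or.inr hadj.symm⟩
    have hsup : ((Walk.cons hax p).concat hyb).support = a :: (p.support ++ [b]) := by
      simp [Walk.support_concat, Walk.support_cons, List.concat_eq_append]
    have hedg : ((Walk.cons hax p).concat hyb).edges
        = s(a,x) :: (p.edges ++ [s(y,b)]) := by
      simp [Walk.edges_concat, Walk.edges_cons, List.concat_eq_append]
    refine ⟨a, b, hax, hyb, ?_, ?_⟩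
    · apply Walk.IsPath.mk'
      rw [hsup]
      refine List.Nodup.cons ?_ ?_
      · intro h
        rcases List.mem_append.mp h with h' | h'
        · exact haP h'
        · exact hab (List.mem_singleton.mp h')
      · refine List.Nodup.append hpath.support_nodup (List.nodup_singleton b) ?_
        intro w hw hw'
        exact hbP ((List.mem_singleton.mp hw') ▸ hw)
    · intro u hu v hv hadj
      rw [hsup] at hu hv
      rw [hedg]
      simp only [List.mem_cons, List.mem_append, List.mem_singleton, List.not_mem_nil, or_false] at hu hv ⊢
      rcases hu with rfl | hu | rfl <;> rcases hv with rfl | hv | rfl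
      · exact absurd hadj (G.loopless.irrefl _)
      · obtain rfl := hA v hv hadj
        exact Or.inl rfl
      · exact absurd hadj hnab
      · obtain rfl := hA u hu hadj.symm
        exact Or.inl Sym2.eq_swap
      · exact Or.inr (Or.inl (hind u hu v hv hadj))
      · obtain rfl := hB u hu hadj.symm
        exact Or.inr (Or.inr rfl)
      · exact absurd hadj.symm hnab
      · obtain rfl := hB v hv hadj
        exact Or.inr (Or.inr Sym2.eq_swap)
      · exact absurd hadj (G.loopless.irrefl _)
end
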